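/- arXiv:2601.03809 — 2 statements merged into one kernel-verified Lean document; each statement's English description precedes it below -/
import Mathlib

section
/- Let M be a matroid on a finite ground set E, let p ≥ 2 and l ≥ 1 be integers, and let (n_1, …, n_p) and (m_1, …, m_p) be p-tuples of integers with n_1 + ⋯ + n_p = m_1 + ⋯ + m_p = 0. Then the coefficientwise inequality f_{l+n_1}(M) f_{l+n_2}(M) ⋯ f_{l+n_p}(M) ≥ f_{l+m_1}(M) f_{l+m_2}(M) ⋯ f_{l+m_p}(M) holds if and only if for every integer k ≤ l and every matroid N = M[𝐗, 𝐪] of size pk and depth l − k, where 𝐗 = (X_1, …, X_p) is a p-tuple of pairwise disjoint subsets of E and 𝐪 = (1, 2, …, p−1), one has π_{(k+n_1, k+n_2, …, k+n_p)}(N) ≥ π_{(k+m_1, k+m_2, …, k+m_p)}(N). -/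
open scoped Classical
open Matroid

/-- `fkZ M z` is the polynomial `Σ_{I independent in M, |I| = z} Π_{e ∈ I} x_e`
in `ℝ[x_e : e ∈ E]` (zero when `z < 0`), for a matroid `M` on the whole finite type. -/
noncomputable def fkZ {α : Type*} [Fintype α] (M : Matroid α) (z : ℤ) : MvPolynomial α ℝ :=
  ∑ I ∈ Finset.univ.filter (fun I : Finset α => M.Indep ↑I ∧ (I.card : ℤ) = z),
    ∏ e ∈ I, MvPolynomial.X e

/-- `piTuple N i` is the number of ordered partitions `(A_1, …, A_p)` of the ground set
of `N` into pairwise disjoint sets, each independent with `|A_s| = i s`. -/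
noncomputable def piTuple {β : Type*} (N : Matroid β) {p : ℕ} (i : Fin p → ℤ) : ℕ :=
  {A : Fin p → Set β | (⋃ s, A s) = N.E ∧ Pairwise (Function.onFun Disjoint A) ∧
    ∀ s, N.Indep (A s) ∧ ((A s).ncard : ℤ) = i s}.ncard

/-- Contraction of the set `C` from `M`, defined via duality: `M/C = (M✶ \ C)✶`. -/
noncomputable def mcontract {α : Type*} (M : Matroid α) (C : Set α) : Matroid α :=
  (M✶ ↾ (M.E \ C))✶

/-- The rank of the set `Y` in the matroid `M`: the maximal size of an independent
subset of `Y`. -/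
noncomputable def rkIn {α : Type*} (M : Matroid α) (Y : Set α) : ℕ :=
  sSup {n : ℕ | ∃ I, M.Indep I ∧ I ⊆ Y ∧ I.ncard = n}

/-- The ground set obtained from pairwise disjoint `X_1, …, X_p` by replacing every
element of `X_j` by `q_j = j` parallel copies for `1 ≤ j ≤ p - 1`, and keeping the
elements of `X_p` (indexed `⟨p-1⟩`) as they are: copies of `x` are the pairs `(x, i)`. -/
def replGround {α : Type*} {p : ℕ} (X : Fin p → Set α) : Set (α × ℕ) :=
  {z | ∃ j : Fin p, z.1 ∈ X j ∧ z.2 < (if (j : ℕ) = p - 1 then 1 else (j : ℕ) + 1)}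

/-- The matroid `M[𝐗, 𝐪]` with `𝐪 = (1, 2, …, p-1)`: restrict `M` to `X_1 ∪ ⋯ ∪ X_p`,
replace each element of `X_j` by `j` parallel copies (for `j ≤ p - 1`) via a comap along
the projection collapsing copies, and finally contract (the copy of) `X_p`. -/
noncomputable def matroidXq {α : Type*} (M : Matroid α) {p : ℕ} (X : Fin p → Set α)
    (hp : 0 < p) : Matroid (α × ℕ) :=
  mcontract (((M ↾ (⋃ j, X j)).comap Prod.fst) ↾ replGround X)
    ((X ⟨p - 1, Nat.sub_lt hp one_pos⟩) ×ˢ ({0} : Set ℕ))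

/-! ### Auxiliary lemmas: contraction -/

open Set

lemma mcontract_ground' {α : Type*} (M : Matroid α) (C : Set α) :
    (mcontract M C).E = M.E \ C := rfl

lemma mcontract_indep_iff_raw {α : Type*} {M : Matroid α} {C I : Set α} (hC : C ⊆ M.E) :
    (mcontract M C).Indep I ↔
      I ⊆ M.E \ C ∧ ∃ B₀, M.IsBase B₀ ∧ M.IsBasis (B₀ ∩ C) C ∧ I ⊆ B₀ := by
  rw [mcontract, dual_indep_iff_exists']
  simp only [restrict_ground_eq]
  constructor
  · rintro ⟨hIE, B', hB', hdisj⟩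
    rw [isBase_restrict_iff (M := M✶) (X := M.E \ C) diff_subset] at hB'
    obtain ⟨D, hD, hB'D⟩ := hB'.indep.exists_isBase_superset
    have hDE : D ⊆ M.E := hD.subset_ground
    set B₀ := M.E \ D with hB₀
    have hBase : M.IsBase B₀ := hD.compl_isBase_of_dual
    have hcompl : (M.E \ B₀) ∩ (M.E \ C) = D ∩ (M.E \ C) := by
      rw [hB₀, diff_diff_cancel_left hDE]
    have hB'eq : B' = (M.E \ B₀) ∩ (M.E \ C) := by
      rw [hcompl]
      refine hB'.eq_of_subset_indep ((hD.indep).subset inter_subset_left)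
        (subset_inter hB'D hB'.subset) inter_subset_right
    refine ⟨hIE, B₀, hBase, ?_, ?_⟩
    · exact (hBase.inter_isBasis_iff_compl_inter_isBasis_dual hC).mpr (hB'eq ▸ hB')
    · intro x hx
      have hxE : x ∈ M.E \ C := hIE hx
      have hxB' : x ∉ B' := (disjoint_left.mp hdisj) hx
      rw [hB'eq, hcompl] at hxB'
      by_contra hxB₀
      exact hxB' ⟨by_contra fun hD' => hxB₀ ⟨hxE.1, hD'⟩, hxE⟩
  · rintro ⟨hIE, B₀, hB₀, hBC, hIB⟩
    refine ⟨hIE, (M.E \ B₀) ∩ (M.E \ C), ?_, ?_⟩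
    · rw [isBase_restrict_iff (M := M✶) (X := M.E \ C) diff_subset]
      exact (hB₀.inter_isBasis_iff_compl_inter_isBasis_dual hC).mp hBC
    · exact Set.disjoint_left.mpr fun x hx hx' => hx'.1.2 (hIB hx)

/-- Independence of the union with a basis does not depend on the choice of basis. -/
lemma indep_union_basis_swap {α : Type*} {M : Matroid α} {C I J J' : Set α}
    (hIfin : I.Finite) (hJ'fin : J'.Finite) (hdj : Disjoint I C)
    (hIE : I ⊆ M.E) (hJ : M.IsBasis J C) (hJ' : M.IsBasis J' C)
    (h : M.Indep (I ∪ J)) : M.Indep (I ∪ J') := by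
  have hCE : C ⊆ M.E := hJ.subset_ground
  have hIC : I ∪ C ⊆ M.E := union_subset hIE hCE
  obtain ⟨K, hK, hIJK⟩ := h.subset_isBasis_of_subset
    (union_subset_union_right I hJ.subset) hIC
  have hKC : K ∩ C = J := by
    refine (hJ.eq_of_subset_indep (hK.indep.subset inter_subset_left)
      (subset_inter (subset_trans subset_union_right hIJK) hJ.subset)
      inter_subset_right).symm
  have hKeq : K = I ∪ J := by
    refine subset_antisymm ?_ hIJK
    intro x hx
    rcases hK.subset hx with hxI | hxC
    · exact Or.inl hxI
    · exact Or.inr (hKC ▸ ⟨hx, hxC⟩)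
  obtain ⟨K', hK', hJ'K'⟩ := hJ'.indep.subset_isBasis_of_subset
    (subset_trans hJ'.subset subset_union_right) hIC
  have hK'C : K' ∩ C = J' := by
    refine (hJ'.eq_of_subset_indep (hK'.indep.subset inter_subset_left)
      (subset_inter hJ'K' hJ'.subset) inter_subset_right).symm
  have hK'eq : K' = (K' ∩ I) ∪ J' := by
    refine subset_antisymm ?_ (union_subset inter_subset_left hJ'K')
    intro x hx
    rcases hK'.subset hx with hxI | hxC
    · exact Or.inl ⟨hx, hxI⟩
    · exact Or.inr (hK'C ▸ ⟨hx, hxC⟩)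
  have hcard : K'.encard = K.encard := hK'.encard_eq_encard hK
  have hJJ' : J.encard = J'.encard := hJ.encard_eq_encard hJ'
  have hdisj1 : Disjoint I J := hdj.mono_right hJ.subset
  have hdisj2 : Disjoint (K' ∩ I) J' := (hdj.mono_right hJ'.subset).mono_left inter_subset_right
  have h1 : K.encard = I.encard + J'.encard := by
    rw [hKeq, encard_union_eq hdisj1, hJJ']
  have h2 : K'.encard = (K' ∩ I).encard + J'.encard := by
    conv_lhs => rw [hK'eq]
    rw [encard_union_eq hdisj2]
  have hIe : (K' ∩ I).encard = I.encard := by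
    have := h2.symm.trans (hcard.trans h1)
    exact WithTop.add_right_cancel hJ'fin.encard_lt_top.ne this
  have : K' ∩ I = I := (hIfin.subset inter_subset_right).eq_of_subset_of_encard_le inter_subset_right hIe.symm.le
  exact hK'.indep.subset (by rw [hK'eq, this])

lemma mcontract_indep_iff' {α : Type*} {M : Matroid α} {C I J : Set α}
    (hfin : M.E.Finite) (hC : C ⊆ M.E) (hJ : M.IsBasis J C) :
    (mcontract M C).Indep I ↔ I ⊆ M.E \ C ∧ M.Indep (I ∪ J) := by
  rw [mcontract_indep_iff_raw hC]
  constructor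
  · rintro ⟨hIE, B₀, hB₀, hBC, hIB⟩
    refine ⟨hIE, ?_⟩
    have h1 : M.Indep (I ∪ B₀ ∩ C) :=
      hB₀.indep.subset (union_subset hIB inter_subset_left)
    exact indep_union_basis_swap (hfin.subset (subset_trans hIE diff_subset))
      (hfin.subset hJ.indep.subset_ground)
      (disjoint_left.mpr fun x hx => (hIE hx).2)
      (subset_trans hIE diff_subset) hBC hJ h1
  · rintro ⟨hIE, h⟩
    have hIC : I ∪ C ⊆ M.E := union_subset (subset_trans hIE diff_subset) hC
    obtain ⟨K, hK, hIJK⟩ := h.subset_isBasis_of_subset (union_subset_union_right I hJ.subset) hIC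
    obtain ⟨B₀, hB₀, hKB₀⟩ := hK.indep.exists_isBase_superset
    have hJB : J ⊆ B₀ ∩ C :=
      subset_inter (subset_trans subset_union_right (hIJK.trans hKB₀)) hJ.subset
    have : J = B₀ ∩ C :=
      hJ.eq_of_subset_indep (hB₀.indep.subset inter_subset_left) hJB inter_subset_right
    exact ⟨hIE, B₀, hB₀, this ▸ hJ, subset_trans subset_union_left (hIJK.trans hKB₀)⟩

/-! ### Auxiliary lemmas: structure of `matroidXq` -/

noncomputable def ddel {α : Type*} {p : ℕ} (X : Fin p → Set α) : α → ℕ :=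
  fun e => ∑ j : Fin p, if e ∈ X j ∧ (j : ℕ) ≠ p - 1 then (j : ℕ) + 1 else 0

def NEset {α : Type*} {p : ℕ} (X : Fin p → Set α) : Set (α × ℕ) :=
  {z | z.2 < ddel X z.1}

section C

variable {α : Type*} {p : ℕ} {X : Fin p → Set α}

lemma mem_unique (hdj : Pairwise (Function.onFun Disjoint X)) {e : α} {j j' : Fin p}
    (h : e ∈ X j) (h' : e ∈ X j') : j = j' := by
  by_contra hne
  exact Set.disjoint_left.mp (hdj hne) h h'

lemma ddel_of_mem (hdj : Pairwise (Function.onFun Disjoint X)) {e : α} {j : Fin p}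
    (he : e ∈ X j) (hj : (j : ℕ) ≠ p - 1) : ddel X e = (j : ℕ) + 1 := by
  rw [ddel, Finset.sum_eq_single j]
  · simp [he, hj]
  · intro j' _ hne
    rw [if_neg]
    rintro ⟨he', -⟩
    exact hne (mem_unique hdj he' he)
  · simp

lemma ddel_of_forall {e : α} (h : ∀ j : Fin p, e ∈ X j → (j : ℕ) = p - 1) : ddel X e = 0 := by
  rw [ddel]
  refine Finset.sum_eq_zero fun j _ => ?_
  rw [if_neg]
  rintro ⟨he, hj⟩
  exact hj (h j he)

lemma exists_of_ddel_pos {e : α} (h : 0 < ddel X e) :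
    ∃ j : Fin p, e ∈ X j ∧ (j : ℕ) ≠ p - 1 := by
  obtain ⟨j, -, hj⟩ := Finset.exists_ne_zero_of_sum_ne_zero (by omega : ddel X e ≠ 0)
  refine ⟨j, ?_⟩
  by_contra hc
  rw [not_and_or, not_not] at hc
  rcases hc with hc | hc
  · exact hj (if_neg (fun hh => hc hh.1))
  · exact hj (if_neg (fun hh => hh.2 hc))

lemma mem_NEset_elim (hdj : Pairwise (Function.onFun Disjoint X)) {z : α × ℕ}
    (hz : z ∈ NEset X) :
    ∃ j : Fin p, z.1 ∈ X j ∧ (j : ℕ) ≠ p - 1 ∧ z.2 < (j : ℕ) + 1 := by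
  obtain ⟨j, hj, hne⟩ := exists_of_ddel_pos (lt_of_le_of_lt (Nat.zero_le _) hz)
  refine ⟨j, hj, hne, ?_⟩
  have := ddel_of_mem hdj hj hne
  rw [NEset, Set.mem_setOf_eq, this] at hz
  exact hz

lemma NEset_subset_replGround (hdj : Pairwise (Function.onFun Disjoint X)) :
    NEset X ⊆ replGround X := by
  rintro z hz
  obtain ⟨j, hj, hne, hlt⟩ := mem_NEset_elim hdj hz
  exact ⟨j, hj, by rw [if_neg hne]; exact hlt⟩

variable (hp : 0 < p)

lemma diff_eq_NEset (hdj : Pairwise (Function.onFun Disjoint X)) :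
    replGround X \ ((X ⟨p - 1, Nat.sub_lt hp one_pos⟩) ×ˢ ({0} : Set ℕ)) = NEset X := by
  ext ⟨e, i⟩
  constructor
  · rintro ⟨⟨j, hej, hi⟩, hni⟩
    by_cases hj : (j : ℕ) = p - 1
    · exfalso
      have hjeq : j = ⟨p - 1, Nat.sub_lt hp one_pos⟩ := Fin.ext hj
      rw [if_pos hj] at hi
      interval_cases i
      exact hni ⟨hjeq ▸ hej, rfl⟩
    · rw [if_neg hj] at hi
      show i < ddel X e
      rw [ddel_of_mem hdj hej hj]
      exact hi
  · intro hz
    obtain ⟨j, hej, hne, hlt⟩ := mem_NEset_elim hdj hz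
    refine ⟨⟨j, hej, by rw [if_neg hne]; exact hlt⟩, ?_⟩
    rintro ⟨heX, -⟩
    exact hne (by rw [mem_unique hdj hej heX])

lemma groundXq {M : Matroid α} (hdj : Pairwise (Function.onFun Disjoint X)) :
    (matroidXq M X hp).E = NEset X := by
  rw [matroidXq, mcontract_ground', restrict_ground_eq, diff_eq_NEset hp hdj]

lemma replGround_finite [Fintype α] : (replGround X).Finite := by
  refine Set.Finite.subset ((Set.finite_univ (α := α)).prod (Set.finite_Iio p)) ?_
  rintro ⟨e, i⟩ ⟨j, -, hi⟩
  refine ⟨Set.mem_univ e, ?_⟩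
  have hj : (j : ℕ) < p := j.isLt
  simp only [Set.mem_Iio]
  split at hi <;> omega

lemma indepXq [Fintype α] {M : Matroid α} (hdj : Pairwise (Function.onFun Disjoint X))
    (hXp : M.Indep (X ⟨p - 1, Nat.sub_lt hp one_pos⟩)) {A : Set (α × ℕ)} :
    (matroidXq M X hp).Indep A ↔ A ⊆ NEset X ∧ Set.InjOn Prod.fst A ∧
      M.Indep (Prod.fst '' A ∪ X ⟨p - 1, Nat.sub_lt hp one_pos⟩) := by
  set plast : Fin p := ⟨p - 1, Nat.sub_lt hp one_pos⟩ with hplast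
  set Xp := X plast with hXpdef
  set Cp : Set (α × ℕ) := Xp ×ˢ ({0} : Set ℕ) with hCp
  set P₀ := ((M ↾ (⋃ j, X j)).comap Prod.fst) ↾ replGround X with hP₀
  have hXpU : Xp ⊆ ⋃ j, X j := Set.subset_iUnion X plast
  have hCpG : Cp ⊆ replGround X := by
    rintro ⟨e, i⟩ ⟨he, hi⟩
    refine ⟨plast, he, ?_⟩
    rw [if_pos rfl]
    simp only [Set.mem_singleton_iff] at hi
    omega
  have hGfin : (replGround X).Finite := replGround_finite
  have hEfin : P₀.E.Finite := by rw [hP₀, restrict_ground_eq]; exact hGfin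
  have hfstCp : Prod.fst '' Cp = Xp := Set.fst_image_prod _ (Set.singleton_nonempty 0)
  have hInjCp : Set.InjOn Prod.fst Cp := by
    rintro ⟨a, b⟩ ⟨-, hb⟩ ⟨c, d⟩ ⟨-, hd⟩ h
    simp only [Set.mem_singleton_iff] at hb hd
    simp_all [Prod.ext_iff]
  have hCpIndep : P₀.Indep Cp := by
    rw [hP₀, restrict_indep_iff, Matroid.comap_indep_iff, restrict_indep_iff, hfstCp]
    exact ⟨⟨⟨hXp, hXpU⟩, hInjCp⟩, hCpG⟩
  have hCpE : Cp ⊆ P₀.E := by rw [hP₀, restrict_ground_eq]; exact hCpG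
  rw [matroidXq, mcontract_indep_iff' hEfin hCpE hCpIndep.isBasis_self]
  rw [show P₀.E \ Cp = NEset X from by
    rw [hP₀, restrict_ground_eq]; exact diff_eq_NEset hp hdj]
  -- key fact: first coordinates of NEset elements avoid Xp
  have hfstA : ∀ {B : Set (α × ℕ)}, B ⊆ NEset X → Prod.fst '' B ⊆ ⋃ j, X j := by
    intro B hB z hz
    obtain ⟨w, hw, rfl⟩ := hz
    obtain ⟨j, hj, -, -⟩ := mem_NEset_elim hdj (hB hw)
    exact Set.mem_iUnion.mpr ⟨j, hj⟩
  have hnotXp : ∀ {B : Set (α × ℕ)}, B ⊆ NEset X → ∀ z ∈ B, (z : α × ℕ).1 ∉ Xp := by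
    intro B hB z hz hzXp
    obtain ⟨j, hj, hne, -⟩ := mem_NEset_elim hdj (hB hz)
    exact hne (by rw [mem_unique hdj hj hzXp])
  constructor
  · rintro ⟨hA, hI⟩
    rw [hP₀, restrict_indep_iff, Matroid.comap_indep_iff, restrict_indep_iff] at hI
    obtain ⟨⟨⟨hMI, hU⟩, hInj⟩, hG⟩ := hI
    refine ⟨hA, hInj.mono Set.subset_union_left, ?_⟩
    rwa [Set.image_union, hfstCp] at hMI
  · rintro ⟨hA, hInj, hMI⟩
    refine ⟨hA, ?_⟩
    rw [hP₀, restrict_indep_iff, Matroid.comap_indep_iff, restrict_indep_iff,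
      Set.image_union, hfstCp]
    refine ⟨⟨⟨hMI, Set.union_subset (hfstA hA) hXpU⟩, ?_⟩,
      Set.union_subset ((NEset_subset_replGround hdj).trans' hA) hCpG⟩
    rintro z (hz | hz) w (hw | hw) heq
    · exact hInj hz hw heq
    · exact absurd (heq ▸ hw.1) (hnotXp hA z hz)
    · exact absurd (heq ▸ hz.1 : (w : α × ℕ).1 ∈ Xp) (hnotXp hA w hw)
    · exact hInjCp hz hw heq
end C

/-! ### Coefficient formula -/

lemma prod_monomial_one {ι σ : Type*} (s : Finset ι) (f : ι → (σ →₀ ℕ)) :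
    ∏ i ∈ s, (MvPolynomial.monomial (f i) (1 : ℝ)) = MvPolynomial.monomial (∑ i ∈ s, f i) 1 := by
  induction s using Finset.cons_induction with
  | empty => simp
  | cons a s ha ih =>
      rw [Finset.prod_cons, ih, MvPolynomial.monomial_mul, Finset.sum_cons, one_mul]

noncomputable def Tset {α : Type*} [Fintype α] (M : Matroid α) {p : ℕ} (s : Fin p → ℤ)
    (d : α → ℕ) : Finset (Fin p → Finset α) :=
  Finset.univ.filter (fun I => (∀ j, M.Indep ↑(I j) ∧ ((I j).card : ℤ) = s j) ∧
    ∀ e, (Finset.univ.filter (fun j => e ∈ I j)).card = d e)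

lemma coeff_prod_fkZ {α : Type*} [Fintype α] (M : Matroid α) {p : ℕ} (s : Fin p → ℤ)
    (d : α →₀ ℕ) :
    MvPolynomial.coeff d (∏ j, fkZ M (s j)) = ((Tset M s (fun e => d e)).card : ℝ) := by
  unfold fkZ
  rw [Finset.prod_univ_sum]
  have hmono : ∀ I : Fin p → Finset α,
      (∏ j, ∏ e ∈ I j, (MvPolynomial.X e : MvPolynomial α ℝ))
      = MvPolynomial.monomial (∑ j, ∑ e ∈ I j, Finsupp.single e 1) 1 := by
    intro I
    rw [← prod_monomial_one]
    refine Finset.prod_congr rfl fun j _ => ?_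
    rw [← prod_monomial_one]
    exact Finset.prod_congr rfl fun e _ => rfl
  have hW : ∀ I : Fin p → Finset α, ∀ e : α,
      (∑ j, ∑ e' ∈ I j, Finsupp.single e' (1 : ℕ)) e
        = (Finset.univ.filter (fun j => e ∈ I j)).card := by
    intro I e
    rw [Finsupp.finset_sum_apply]
    have h1 : ∀ j : Fin p, (∑ e' ∈ I j, Finsupp.single e' (1 : ℕ)) e
        = if e ∈ I j then 1 else 0 := by
      intro j
      rw [Finsupp.finset_sum_apply]
      simp_rw [Finsupp.single_apply]
      exact Finset.sum_ite_eq' (I j) e (fun _ => 1)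
    simp_rw [h1]
    simp [Finset.sum_boole]
  rw [MvPolynomial.coeff_sum]
  simp_rw [hmono, MvPolynomial.coeff_monomial]
  rw [Finset.sum_boole]
  congr 1
  congr 1
  ext I
  simp only [Tset, Finset.mem_filter, Fintype.mem_piFinset, Finset.mem_univ, true_and]
  constructor
  · rintro ⟨h1, h2⟩
    refine ⟨h1, fun e => ?_⟩
    rw [← hW I e, h2]
  · rintro ⟨h1, h2⟩
    refine ⟨h1, ?_⟩
    ext e
    rw [hW I e, h2 e]

/-! ### Counting helpers -/

lemma nat_card_sigma {ι : Type*} [Fintype ι] (f : ι → Type*) [∀ i, Finite (f i)] :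
    Nat.card (Σ i, f i) = ∑ i, Nat.card (f i) := by
  haveI : ∀ i, Fintype (f i) := fun i => Fintype.ofFinite _
  rw [Nat.card_eq_fintype_card, Fintype.card_sigma]
  exact Finset.sum_congr rfl fun i _ => (Nat.card_eq_fintype_card).symm

lemma card_psi {t p : ℕ} (P : Fin p → Prop)
    (hS : t ≠ 0 → (Finset.univ.filter P).card = t) :
    Nat.card {g : Fin t → Fin p // Function.Injective g ∧ ∀ i, P (g i)} = t.factorial := by
  rcases Nat.eq_zero_or_pos t with rfl | ht
  · haveI : Unique {g : Fin 0 → Fin p // Function.Injective g ∧ ∀ i, P (g i)} :=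
      { default := ⟨Fin.elim0, fun i => i.elim0, fun i => i.elim0⟩
        uniq := by rintro ⟨g, -⟩; ext i; exact i.elim0 }
    exact Nat.card_unique
  · have hcard := hS ht.ne'
    have e : {g : Fin t → Fin p // Function.Injective g ∧ ∀ i, P (g i)} ≃
        (Fin t ↪ {j : Fin p // P j}) :=
      { toFun := fun g => ⟨fun i => ⟨g.1 i, g.2.2 i⟩,
          fun i i' h => g.2.1 (congrArg Subtype.val h)⟩
        invFun := fun F => ⟨fun i => (F i).1,
          fun i i' h => F.injective (Subtype.ext h), fun i => (F i).2⟩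
        left_inv := fun g => rfl
        right_inv := fun F => rfl }
    rw [Nat.card_congr e, Nat.card_eq_fintype_card, Fintype.card_embedding_eq,
      Fintype.card_fin, Fintype.card_subtype, hcard, Nat.descFactorial_self]

/-! ### The partition–tuple correspondence -/

def PsetD {β : Type*} (N : Matroid β) {p : ℕ} (i : Fin p → ℤ) : Set (Fin p → Set β) :=
  {A | (⋃ s, A s) = N.E ∧ Pairwise (Function.onFun Disjoint A) ∧
    ∀ s, N.Indep (A s) ∧ ((A s).ncard : ℤ) = i s}

lemma piTuple_eq_ncard {β : Type*} (N : Matroid β) {p : ℕ} (i : Fin p → ℤ) :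
    piTuple N i = (PsetD N i).ncard := rfl

noncomputable def sigA {α : Type*} {p : ℕ} (hp : 0 < p) (A : Fin p → Set (α × ℕ))
    (z : α × ℕ) : Fin p :=
  if h : ∃ j, z ∈ A j then h.choose else ⟨0, hp⟩

lemma sigA_mem {α : Type*} {p : ℕ} (hp : 0 < p) {A : Fin p → Set (α × ℕ)} {z : α × ℕ}
    (h : ∃ j, z ∈ A j) : z ∈ A (sigA hp A z) := by
  rw [sigA, dif_pos h]; exact h.choose_spec

lemma sigA_eq {α : Type*} {p : ℕ} (hp : 0 < p) {A : Fin p → Set (α × ℕ)}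
    (hdisj : Pairwise (Function.onFun Disjoint A)) {z : α × ℕ} {j : Fin p} (hz : z ∈ A j) :
    sigA hp A z = j := by
  by_contra hne
  exact Set.disjoint_left.mp (hdisj hne) (sigA_mem hp ⟨j, hz⟩) hz

noncomputable def dfun {α : Type*} {p : ℕ} (hp : 0 < p) (X : Fin p → Set α) : α → ℕ :=
  fun e => if e ∈ X ⟨p - 1, Nat.sub_lt hp one_pos⟩ then p else ddel X e

section E

variable {α : Type*} [Fintype α] {p : ℕ} {M : Matroid α} {X : Fin p → Set α}

lemma mem_Tset_of_mem_Pset (hp : 0 < p) (hdj : Pairwise (Function.onFun Disjoint X))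
    (hXp : M.Indep (X ⟨p - 1, Nat.sub_lt hp one_pos⟩)) (s : Fin p → ℤ) {A : Fin p → Set (α × ℕ)}
    (hA : A ∈ PsetD (matroidXq M X hp)
      (fun j => s j - ((X ⟨p - 1, Nat.sub_lt hp one_pos⟩).ncard : ℤ))) :
    (fun j => (Prod.fst '' A j ∪ X ⟨p - 1, Nat.sub_lt hp one_pos⟩).toFinset)
      ∈ Tset M s (dfun hp X) := by
  set plast : Fin p := ⟨p - 1, Nat.sub_lt hp one_pos⟩ with hpl
  obtain ⟨hU, hdisjA, hcond⟩ := hA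
  rw [groundXq hp hdj] at hU
  have hchar : ∀ j, A j ⊆ NEset X ∧ Set.InjOn Prod.fst (A j) ∧
      M.Indep (Prod.fst '' A j ∪ X plast) :=
    fun j => (indepXq hp hdj hXp).mp (hcond j).1
  have hnotXp : ∀ j, ∀ e ∈ Prod.fst '' A j, e ∉ X plast := by
    rintro j e ⟨z, hz, rfl⟩ heXp
    obtain ⟨j₀, hj₀, hne, -⟩ := mem_NEset_elim hdj ((hchar j).1 hz)
    exact hne (by rw [mem_unique hdj hj₀ heXp])
  simp only [Tset, Finset.mem_filter, Finset.mem_univ, true_and]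
  constructor
  · intro j
    constructor
    · rw [Set.coe_toFinset]; exact (hchar j).2.2
    · have h1 : (((Prod.fst '' A j ∪ X plast).toFinset.card : ℕ) : ℤ)
          = ((Prod.fst '' A j).ncard : ℤ) + ((X plast).ncard : ℤ) := by
        rw [← Set.ncard_eq_toFinset_card',
          Set.ncard_union_eq (Set.disjoint_left.mpr (hnotXp j))]
        push_cast; ring
      rw [h1, Set.ncard_image_of_injOn (hchar j).2.1, (hcond j).2]
      ring
  · intro e
    by_cases heXp : e ∈ X plast
    · have huniv : Finset.univ.filter
          (fun j => e ∈ (Prod.fst '' A j ∪ X plast).toFinset) = Finset.univ := by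
        refine Finset.eq_univ_of_forall fun j => ?_
        simp only [Finset.mem_filter, Finset.mem_univ, true_and, Set.mem_toFinset]
        exact Or.inr heXp
      rw [huniv, show dfun hp X e = p from if_pos heXp]
      simp
    · rw [show dfun hp X e = ddel X e from if_neg heXp]
      have hmem : ∀ j, e ∈ (Prod.fst '' A j ∪ X plast).toFinset ↔ ∃ i : ℕ, (e, i) ∈ A j := by
        intro j
        rw [Set.mem_toFinset]
        constructor
        · rintro (⟨z, hz, rfl⟩ | h)
          · exact ⟨z.2, by rwa [Prod.mk.eta]⟩
          · exact absurd h heXp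
        · rintro ⟨i, hi⟩; exact Or.inl ⟨(e, i), hi, rfl⟩
      rcases Nat.eq_zero_or_pos (ddel X e) with h0 | hpos
      · rw [h0, Finset.card_eq_zero]
        refine Finset.filter_eq_empty_iff.mpr fun {j} _ => ?_
        rw [hmem j]
        rintro ⟨i, hi⟩
        have h2 : i < ddel X e := (hchar j).1 hi
        omega
      · rw [← Finset.card_range (ddel X e)]
        have hArange : ∀ i ∈ Finset.range (ddel X e), (e, i) ∈ A (sigA hp A (e, i)) := by
          intro i hi
          refine sigA_mem hp (Set.mem_iUnion.mp ?_)
          rw [hU]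
          exact Finset.mem_range.mp hi
        refine (Finset.card_bij (fun i _ => sigA hp A (e, i)) ?_ ?_ ?_).symm
        · intro i hi
          rw [Finset.mem_filter]
          exact ⟨Finset.mem_univ _, (hmem _).mpr ⟨i, hArange i hi⟩⟩
        · intro i₁ h₁ i₂ h₂ heq
          have m₁ := hArange i₁ h₁
          have m₂ := hArange i₂ h₂
          rw [heq] at m₁
          exact congrArg Prod.snd ((hchar _).2.1 m₁ m₂ rfl)
        · intro j hj
          rw [Finset.mem_filter, hmem] at hj
          obtain ⟨-, i, hi⟩ := hj
          have h2 : i < ddel X e := (hchar j).1 hi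
          exact ⟨i, Finset.mem_range.mpr h2, by exact sigA_eq hp hdisjA hi⟩

def AofG {α : Type*} {p : ℕ} (X : Fin p → Set α) (g : ∀ e : α, Fin (ddel X e) → Fin p)
    (j : Fin p) : Set (α × ℕ) :=
  {z | ∃ h : z.2 < ddel X z.1, g z.1 ⟨z.2, h⟩ = j}

lemma mem_Pset_of_g (hp : 0 < p) (hdj : Pairwise (Function.onFun Disjoint X))
    (hXp : M.Indep (X ⟨p - 1, Nat.sub_lt hp one_pos⟩)) (s : Fin p → ℤ) {I : Fin p → Finset α}
    (hI : I ∈ Tset M s (dfun hp X)) (g : ∀ e : α, Fin (ddel X e) → Fin p)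
    (hginj : ∀ e, Function.Injective (g e)) (hgmem : ∀ e i, e ∈ I (g e i)) :
    AofG X g ∈ PsetD (matroidXq M X hp)
        (fun j => s j - ((X ⟨p - 1, Nat.sub_lt hp one_pos⟩).ncard : ℤ))
      ∧ (fun j => (Prod.fst '' AofG X g j ∪ X ⟨p - 1, Nat.sub_lt hp one_pos⟩).toFinset) = I := by
  set plast : Fin p := ⟨p - 1, Nat.sub_lt hp one_pos⟩ with hpl
  rw [Tset, Finset.mem_filter] at hI
  obtain ⟨-, hIind, hIpat⟩ := hI
  have hXpI : ∀ e ∈ X plast, ∀ j, e ∈ I j := by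
    intro e he j
    have h1 : (Finset.univ.filter (fun j => e ∈ I j)).card = p := by
      rw [hIpat e, dfun, if_pos he]
    have h2 : Finset.univ.filter (fun j => e ∈ I j) = Finset.univ := by
      apply Finset.eq_univ_of_card
      rw [h1, Fintype.card_fin]
    have := Finset.mem_univ j
    rw [← h2, Finset.mem_filter] at this
    exact this.2
  have hsubNE : ∀ j, AofG X g j ⊆ NEset X := fun j z hz => hz.1
  have hUnion : (⋃ j, AofG X g j) = NEset X := by
    refine subset_antisymm (Set.iUnion_subset hsubNE) fun z hz => ?_
    exact Set.mem_iUnion.mpr ⟨g z.1 ⟨z.2, hz⟩, hz, rfl⟩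
  have hdisjA : Pairwise (Function.onFun Disjoint (AofG X g)) := by
    intro j j' hne
    refine Set.disjoint_left.mpr ?_
    rintro z ⟨h1, e1⟩ ⟨h2, e2⟩
    exact hne (by rw [← e1, ← e2])
  have hinjA : ∀ j, Set.InjOn Prod.fst (AofG X g j) := by
    rintro j ⟨e, i⟩ ⟨h1, hg1⟩ ⟨e', i'⟩ ⟨h2, hg2⟩ heq
    simp only at heq
    subst heq
    have : (⟨i, h1⟩ : Fin (ddel X e)) = ⟨i', h2⟩ := hginj e (hg1.trans hg2.symm)
    rw [Prod.mk.injEq]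
    exact ⟨rfl, congrArg Fin.val this⟩
  have hnotXp : ∀ j, Disjoint (Prod.fst '' AofG X g j) (X plast) := by
    intro j
    rw [Set.disjoint_left]
    rintro e ⟨z, ⟨h, -⟩, rfl⟩ heXp
    obtain ⟨j₀, hj₀, hne, -⟩ := mem_NEset_elim hdj (show z ∈ NEset X from h)
    exact hne (by rw [mem_unique hdj hj₀ heXp])
  have hfst : ∀ j, Prod.fst '' AofG X g j ∪ X plast = ↑(I j) := by
    intro j
    apply subset_antisymm
    · refine Set.union_subset ?_ (fun e he => hXpI e he j)
      rintro e ⟨z, ⟨h, hgz⟩, rfl⟩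
      have := hgmem z.1 ⟨z.2, h⟩
      rwa [hgz] at this
    · intro e he
      rw [Finset.mem_coe] at he
      by_cases heXp : e ∈ X plast
      · exact Or.inr heXp
      · have hpat : (Finset.univ.filter (fun j' => e ∈ I j')).card = ddel X e := by
          rw [hIpat e, dfun, if_neg heXp]
        have hne0 : ddel X e ≠ 0 := by
          intro h0
          have : j ∈ Finset.univ.filter (fun j' => e ∈ I j') :=
            Finset.mem_filter.mpr ⟨Finset.mem_univ _, he⟩
          rw [Finset.card_eq_zero.mp (hpat.trans h0)] at this
          exact absurd this (Finset.notMem_empty j)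
        have himage : Finset.univ.filter (fun j' => e ∈ I j')
            = Finset.univ.image (fun i : Fin (ddel X e) => g e i) := by
          refine (Finset.eq_of_subset_of_card_le ?_ ?_).symm
          · intro j' hj'
            obtain ⟨i, -, rfl⟩ := Finset.mem_image.mp hj'
            exact Finset.mem_filter.mpr ⟨Finset.mem_univ _, hgmem e i⟩
          · rw [hpat, Finset.card_image_of_injective _ (hginj e), Finset.card_univ,
              Fintype.card_fin]
        have : j ∈ Finset.univ.image (fun i : Fin (ddel X e) => g e i) := by
          rw [← himage]
          exact Finset.mem_filter.mpr ⟨Finset.mem_univ _, he⟩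
        obtain ⟨i, -, hgi⟩ := Finset.mem_image.mp this
        exact Or.inl ⟨(e, (i : ℕ)), ⟨i.isLt, hgi⟩, rfl⟩
  have hcardA : ∀ j, (((AofG X g j).ncard : ℕ) : ℤ) = s j - ((X plast).ncard : ℤ) := by
    intro j
    have h1 : (AofG X g j).ncard = (Prod.fst '' AofG X g j).ncard :=
      (Set.ncard_image_of_injOn (hinjA j)).symm
    have h2 : (Prod.fst '' AofG X g j).ncard + (X plast).ncard = (I j).card := by
      rw [← Set.ncard_union_eq (hnotXp j), hfst j, Set.ncard_coe_finset]
    have h3 := (hIind j).2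
    rw [h1]
    omega
  have hindep : ∀ j, (matroidXq M X hp).Indep (AofG X g j) := by
    intro j
    rw [indepXq hp hdj hXp]
    refine ⟨hsubNE j, hinjA j, ?_⟩
    rw [hfst j]
    exact (hIind j).1
  refine ⟨⟨by rw [groundXq hp hdj]; exact hUnion, hdisjA, fun j => ⟨hindep j, hcardA j⟩⟩, ?_⟩
  funext j
  apply Finset.coe_injective
  rw [Set.coe_toFinset, hfst j]

lemma fiber_card (hp : 0 < p) (hdj : Pairwise (Function.onFun Disjoint X))
    (hXp : M.Indep (X ⟨p - 1, Nat.sub_lt hp one_pos⟩)) (s : Fin p → ℤ)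
    {I : Fin p → Finset α} (hI : I ∈ Tset M s (dfun hp X)) :
    Nat.card {A : ↥(PsetD (matroidXq M X hp)
        (fun j => s j - ((X ⟨p - 1, Nat.sub_lt hp one_pos⟩).ncard : ℤ))) //
        (fun j => (Prod.fst '' A.1 j ∪ X ⟨p - 1, Nat.sub_lt hp one_pos⟩).toFinset) = I}
      = ∏ e : α, (ddel X e).factorial := by
  set plast : Fin p := ⟨p - 1, Nat.sub_lt hp one_pos⟩ with hpl
  set PS := PsetD (matroidXq M X hp) (fun j => s j - ((X plast).ncard : ℤ)) with hPS
  -- facts about elements of PS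
  have hUf : ∀ B, B ∈ PS → (⋃ j, B j) = NEset X := by
    intro B hB
    have := hB.1
    rwa [groundXq hp hdj] at this
  have hcharf : ∀ B, B ∈ PS → ∀ j, B j ⊆ NEset X ∧ Set.InjOn Prod.fst (B j) ∧
      M.Indep (Prod.fst '' B j ∪ X plast) :=
    fun B hB j => (indepXq hp hdj hXp).mp (hB.2.2 j).1
  have hmemA : ∀ B, B ∈ PS → ∀ (e : α) (i : Fin (ddel X e)),
      (e, (i : ℕ)) ∈ B (sigA hp B (e, (i : ℕ))) := by
    intro B hB e i
    refine sigA_mem hp (Set.mem_iUnion.mp ?_)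
    rw [hUf B hB]
    exact i.isLt
  have e1 : {A : ↥PS //
      (fun j => (Prod.fst '' A.1 j ∪ X plast).toFinset) = I} ≃
      ∀ e : α, {g : Fin (ddel X e) → Fin p // Function.Injective g ∧ ∀ i, e ∈ I (g i)} :=
    { toFun := fun A e =>
        ⟨fun i => sigA hp A.1.1 (e, (i : ℕ)), by
          intro i i' heq
          have m₁ := hmemA A.1.1 A.1.2 e i
          have m₂ := hmemA A.1.1 A.1.2 e i'
          simp only at heq
          rw [heq] at m₁
          have := (hcharf A.1.1 A.1.2 _).2.1 m₁ m₂ rfl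
          exact Fin.ext (congrArg Prod.snd this), by
          intro i
          have m₁ := hmemA A.1.1 A.1.2 e i
          rw [← congrFun A.2 (sigA hp A.1.1 (e, (i : ℕ))), Set.mem_toFinset]
          exact Or.inl ⟨_, m₁, rfl⟩⟩
      invFun := fun g =>
        ⟨⟨AofG X (fun e => (g e).1),
          (mem_Pset_of_g hp hdj hXp s hI _ (fun e => (g e).2.1) (fun e i => (g e).2.2 i)).1⟩,
          (mem_Pset_of_g hp hdj hXp s hI _ (fun e => (g e).2.1) (fun e i => (g e).2.2 i)).2⟩
      left_inv := by
        rintro ⟨⟨B, hB⟩, hfib⟩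
        apply Subtype.ext
        apply Subtype.ext
        funext j
        ext ⟨e, i⟩
        simp only [AofG, Set.mem_setOf_eq]
        constructor
        · rintro ⟨h, hs⟩
          have := hmemA B hB e ⟨i, h⟩
          rwa [hs] at this
        · intro hz
          have hNE : (e, i) ∈ NEset X := (hcharf B hB j).1 hz
          exact ⟨hNE, sigA_eq hp hB.2.1 hz⟩
      right_inv := by
        intro g
        funext e
        apply Subtype.ext
        funext i
        simp only
        refine sigA_eq hp
          (mem_Pset_of_g hp hdj hXp s hI _ (fun e => (g e).2.1) (fun e i => (g e).2.2 i)).1.2.1 ?_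
        exact ⟨i.isLt, rfl⟩ }
  rw [Nat.card_congr e1, Nat.card_pi]
  refine Finset.prod_congr rfl fun e _ => ?_
  refine card_psi (fun j => e ∈ I j) fun hne => ?_
  have heXp : e ∉ X plast := by
    intro heXp
    obtain ⟨j₀, hj₀, hj₀ne⟩ := exists_of_ddel_pos (Nat.pos_of_ne_zero hne)
    exact hj₀ne (by rw [mem_unique hdj hj₀ heXp])
  rw [Tset, Finset.mem_filter] at hI
  have hcard := hI.2.2 e
  rw [show dfun hp X e = ddel X e from if_neg heXp] at hcard
  convert hcard using 2
  exact Finset.filter_congr_decidable _ _ _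

lemma piTuple_eq_card_mul (hp : 0 < p) (hdj : Pairwise (Function.onFun Disjoint X))
    (hXp : M.Indep (X ⟨p - 1, Nat.sub_lt hp one_pos⟩)) (s : Fin p → ℤ) :
    piTuple (matroidXq M X hp)
        (fun j => s j - ((X ⟨p - 1, Nat.sub_lt hp one_pos⟩).ncard : ℤ))
      = (Tset M s (dfun hp X)).card * ∏ e : α, (ddel X e).factorial := by
  set plast : Fin p := ⟨p - 1, Nat.sub_lt hp one_pos⟩ with hpl
  set PS := PsetD (matroidXq M X hp) (fun j => s j - ((X plast).ncard : ℤ)) with hPS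
  have h0 : piTuple (matroidXq M X hp) (fun j => s j - ((X plast).ncard : ℤ))
      = Nat.card ↥PS :=
    (piTuple_eq_ncard _ _).trans (Nat.card_coe_set_eq _).symm
  have hNEfin : (NEset X).Finite := replGround_finite.subset (NEset_subset_replGround hdj)
  have hPSfin : PS.Finite := by
    refine Set.Finite.subset
      (Set.Finite.pi (fun _ : Fin p => hNEfin.finite_subsets)) ?_
    intro A hA
    rw [Set.mem_pi]
    intro j _
    have h1 : A j ⊆ ⋃ j', A j' := Set.subset_iUnion A j
    rw [hA.1, groundXq hp hdj] at h1
    exact h1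
  haveI : Finite ↥PS := hPSfin.to_subtype
  set F : ↥PS → ↥(Tset M s (dfun hp X)) :=
    fun A => ⟨_, mem_Tset_of_mem_Pset hp hdj hXp s A.2⟩ with hF
  have h1 : Nat.card ↥PS = ∑ I : ↥(Tset M s (dfun hp X)), Nat.card {A : ↥PS // F A = I} := by
    rw [Nat.card_congr (Equiv.sigmaFiberEquiv F).symm, nat_card_sigma]
  have h2 : ∀ I : ↥(Tset M s (dfun hp X)),
      Nat.card {A : ↥PS // F A = I} = ∏ e : α, (ddel X e).factorial := by
    intro I
    rw [Nat.card_congr (Equiv.subtypeEquivRight (fun A =>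
      Subtype.ext_iff))]
    exact fiber_card hp hdj hXp s I.2
  rw [h0, h1]
  simp only [h2]
  rw [Finset.sum_const, Finset.card_univ, Fintype.card_coe, smul_eq_mul]

lemma ncard_NEset : (NEset X).ncard = ∑ e : α, ddel X e := by
  have e3 : ↥(NEset X) ≃ Σ e : α, Fin (ddel X e) :=
    { toFun := fun z => ⟨z.1.1, ⟨z.1.2, z.2⟩⟩
      invFun := fun z => ⟨(z.1, (z.2 : ℕ)), z.2.isLt⟩
      left_inv := fun z => rfl
      right_inv := fun z => rfl }
  rw [← Nat.card_coe_set_eq, Nat.card_congr e3, nat_card_sigma]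
  refine Finset.sum_congr rfl fun e _ => ?_
  rw [Nat.card_eq_fintype_card, Fintype.card_fin]

lemma rkIn_eq_ncard_basis {Y B : Set α} (hB : M.IsBasis B Y) : rkIn M Y = B.ncard := by
  refine IsGreatest.csSup_eq ⟨⟨B, hB.indep, hB.subset, rfl⟩, ?_⟩
  rintro n ⟨I, hI, hIY, rfl⟩
  obtain ⟨B', hB', hIB'⟩ := hI.subset_isBasis_of_subset hIY hB.subset_ground
  have h1 : I.ncard ≤ B'.ncard := Set.ncard_le_ncard hIB' (Set.toFinite _)
  have h2 : B'.ncard = B.ncard := by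
    have := hB'.encard_eq_encard hB
    rw [Set.ncard_def, Set.ncard_def, this]
  omega

lemma rkIn_indep {Y : Set α} (hY : M.Indep Y) : rkIn M Y = Y.ncard :=
  rkIn_eq_ncard_basis hY.isBasis_self

lemma indepXq' (hp : 0 < p) (hdj : Pairwise (Function.onFun Disjoint X)) {B : Set α}
    (hB : M.IsBasis B (X ⟨p - 1, Nat.sub_lt hp one_pos⟩)) {A : Set (α × ℕ)} :
    (matroidXq M X hp).Indep A ↔ A ⊆ NEset X ∧ Set.InjOn Prod.fst A ∧
      M.Indep (Prod.fst '' A ∪ B) := by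
  set plast : Fin p := ⟨p - 1, Nat.sub_lt hp one_pos⟩ with hplast
  set Xp := X plast with hXpdef
  set Cp : Set (α × ℕ) := Xp ×ˢ ({0} : Set ℕ) with hCp
  set Jp : Set (α × ℕ) := B ×ˢ ({0} : Set ℕ) with hJp
  set P₀ := ((M ↾ (⋃ j, X j)).comap Prod.fst) ↾ replGround X with hP₀
  have hBXp : B ⊆ Xp := hB.subset
  have hXpU : Xp ⊆ ⋃ j, X j := Set.subset_iUnion X plast
  have hCpG : Cp ⊆ replGround X := by
    rintro ⟨e, i⟩ ⟨he, hi⟩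
    refine ⟨plast, he, ?_⟩
    rw [if_pos rfl]
    simp only [Set.mem_singleton_iff] at hi
    omega
  have hJpCp : Jp ⊆ Cp := Set.prod_mono hBXp (subset_refl _)
  have hGfin : (replGround X).Finite := replGround_finite
  have hEfin : P₀.E.Finite := by rw [hP₀, restrict_ground_eq]; exact hGfin
  have hfstJp : Prod.fst '' Jp = B := Set.fst_image_prod _ (Set.singleton_nonempty 0)
  have hfstCp : Prod.fst '' Cp = Xp := Set.fst_image_prod _ (Set.singleton_nonempty 0)
  have hInjCp : Set.InjOn Prod.fst Cp := by
    rintro ⟨a, b⟩ ⟨-, hb⟩ ⟨c, d⟩ ⟨-, hd⟩ h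
    simp only [Set.mem_singleton_iff] at hb hd
    simp_all [Prod.ext_iff]
  have hJpIndep : P₀.Indep Jp := by
    rw [hP₀, restrict_indep_iff, Matroid.comap_indep_iff, restrict_indep_iff, hfstJp]
    exact ⟨⟨⟨hB.indep, hBXp.trans hXpU⟩, hInjCp.mono hJpCp⟩, hJpCp.trans hCpG⟩
  have hCpE : Cp ⊆ P₀.E := by rw [hP₀, restrict_ground_eq]; exact hCpG
  -- Jp is a basis of Cp in P₀
  have hJbasis : P₀.IsBasis Jp Cp := by
    rw [isBasis_iff hCpE]
    refine ⟨hJpIndep, hJpCp, fun J hJ hJpJ hJCp => ?_⟩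
    rw [hP₀, restrict_indep_iff, Matroid.comap_indep_iff, restrict_indep_iff] at hJ
    obtain ⟨⟨⟨hJind, -⟩, hJinj⟩, -⟩ := hJ
    have hSXp : Prod.fst '' J ⊆ Xp := by
      rw [← hfstCp]; exact Set.image_mono hJCp
    have hBS : B ⊆ Prod.fst '' J := by
      rw [← hfstJp]; exact Set.image_mono hJpJ
    have hBeq : B = Prod.fst '' J := hB.eq_of_subset_indep hJind hBS hSXp
    apply subset_antisymm hJpJ
    rintro ⟨e, i⟩ hz
    have hi0 : i = 0 := (hJCp hz).2
    refine ⟨?_, hi0⟩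
    rw [hBeq]
    exact ⟨(e, i), hz, rfl⟩
  rw [matroidXq, mcontract_indep_iff' hEfin hCpE hJbasis]
  rw [show P₀.E \ Cp = NEset X from by
    rw [hP₀, restrict_ground_eq]; exact diff_eq_NEset hp hdj]
  have hfstA : ∀ {W : Set (α × ℕ)}, W ⊆ NEset X → Prod.fst '' W ⊆ ⋃ j, X j := by
    intro W hW z hz
    obtain ⟨w, hw, rfl⟩ := hz
    obtain ⟨j, hj, -, -⟩ := mem_NEset_elim hdj (hW hw)
    exact Set.mem_iUnion.mpr ⟨j, hj⟩
  have hnotXp : ∀ {W : Set (α × ℕ)}, W ⊆ NEset X → ∀ z ∈ W, (z : α × ℕ).1 ∉ Xp := by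
    intro W hW z hz hzXp
    obtain ⟨j, hj, hne, -⟩ := mem_NEset_elim hdj (hW hz)
    exact hne (by rw [mem_unique hdj hj hzXp])
  constructor
  · rintro ⟨hA, hI⟩
    rw [hP₀, restrict_indep_iff, Matroid.comap_indep_iff, restrict_indep_iff] at hI
    obtain ⟨⟨⟨hMI, hU⟩, hInj⟩, hG⟩ := hI
    refine ⟨hA, hInj.mono Set.subset_union_left, ?_⟩
    rwa [Set.image_union, hfstJp] at hMI
  · rintro ⟨hA, hInj, hMI⟩
    refine ⟨hA, ?_⟩
    rw [hP₀, restrict_indep_iff, Matroid.comap_indep_iff, restrict_indep_iff,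
      Set.image_union, hfstJp]
    refine ⟨⟨⟨hMI, Set.union_subset (hfstA hA) ((hBXp.trans hXpU))⟩, ?_⟩,
      Set.union_subset ((NEset_subset_replGround hdj).trans' hA) (hJpCp.trans hCpG)⟩
    rintro z (hz | hz) w (hw | hw) heq
    · exact hInj hz hw heq
    · exact absurd (heq ▸ (hJpCp hw).1) (hnotXp hA z hz)
    · exact absurd (heq ▸ (hJpCp hz).1 : (w : α × ℕ).1 ∈ Xp) (hnotXp hA w hw)
    · exact hInjCp.mono hJpCp hz hw heq

lemma pairwise_update (hp : 0 < p) (hdj : Pairwise (Function.onFun Disjoint X)) {B : Set α}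
    (hBXp : B ⊆ X ⟨p - 1, Nat.sub_lt hp one_pos⟩) :
    Pairwise (Function.onFun Disjoint
      (Function.update X ⟨p - 1, Nat.sub_lt hp one_pos⟩ B)) := by
  set plast : Fin p := ⟨p - 1, Nat.sub_lt hp one_pos⟩
  intro i j hne
  unfold Function.onFun
  by_cases hi : i = plast
  · subst hi
    rw [Function.update_self, Function.update_of_ne (Ne.symm hne)]
    exact (hdj hne).mono_left hBXp
  · by_cases hj : j = plast
    · subst hj
      rw [Function.update_self, Function.update_of_ne hi]
      exact (hdj hne).mono_right hBXp
    · rw [Function.update_of_ne hi, Function.update_of_ne hj]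
      exact hdj hne

lemma ddel_update (hp : 0 < p) {B : Set α} :
    ddel (Function.update X ⟨p - 1, Nat.sub_lt hp one_pos⟩ B) = ddel X := by
  funext e
  refine Finset.sum_congr rfl fun j _ => ?_
  by_cases hj : (j : ℕ) = p - 1
  · simp [hj]
  · rw [Function.update_of_ne (fun h => hj (by rw [h]))]

lemma matroidXq_update (hp : 0 < p) (hdj : Pairwise (Function.onFun Disjoint X)) {B : Set α}
    (hB : M.IsBasis B (X ⟨p - 1, Nat.sub_lt hp one_pos⟩)) :
    matroidXq M (Function.update X ⟨p - 1, Nat.sub_lt hp one_pos⟩ B) hp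
      = matroidXq M X hp := by
  set plast : Fin p := ⟨p - 1, Nat.sub_lt hp one_pos⟩ with hplast
  set X' := Function.update X plast B with hX'
  have hdj' := pairwise_update hp hdj hB.subset
  have hX'pl : X' plast = B := Function.update_self _ _ _
  have hNE : NEset X' = NEset X := by
    unfold NEset
    rw [ddel_update hp]
  have hXp' : M.Indep (X' plast) := by rw [hX'pl]; exact hB.indep
  refine ext_indep ?_ fun A hA => ?_
  · rw [groundXq hp hdj', groundXq hp hdj, hNE]
  · rw [indepXq hp hdj' hXp', indepXq' hp hdj hB, hNE, Function.update_self]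
end E


/-- For a matroid `M` on a finite ground set, `p ≥ 2`, `l ≥ 1`, and integer tuples
`(n_1, …, n_p)`, `(m_1, …, m_p)` each summing to `0`, the coefficientwise inequality
`f_{l+n_1}(M) ⋯ f_{l+n_p}(M) ≥ f_{l+m_1}(M) ⋯ f_{l+m_p}(M)` holds if and only if for
every `k ≤ l` and every matroid `N = M[𝐗, 𝐪]` (with `𝐪 = (1, …, p-1)`) of size `pk`
and depth `l - k`, one has `π_{(k+n_1, …, k+n_p)}(N) ≥ π_{(k+m_1, …, k+m_p)}(N)`. -/
theorem fk_prod_ge_iff_piTuple {α : Type*} [Fintype α] (M : Matroid α)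
    (hE : M.E = Set.univ) (p l : ℕ) (hp : 2 ≤ p) (hl : 1 ≤ l)
    (n m : Fin p → ℤ) (hn : ∑ j, n j = 0) (hm : ∑ j, m j = 0) :
    (∀ d : α →₀ ℕ,
        MvPolynomial.coeff d (∏ j, fkZ M ((l : ℤ) + m j)) ≤
          MvPolynomial.coeff d (∏ j, fkZ M ((l : ℤ) + n j))) ↔
      (∀ k : ℕ, k ≤ l → ∀ X : Fin p → Set α, (∀ j, X j ⊆ M.E) →
        Pairwise (Function.onFun Disjoint X) →
        (matroidXq M X (by omega)).E.ncard = p * k →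
        rkIn M (X ⟨p - 1, by omega⟩) = l - k →
        piTuple (matroidXq M X (by omega)) (fun j => (k : ℤ) + m j) ≤
          piTuple (matroidXq M X (by omega)) (fun j => (k : ℤ) + n j)) := by
  have hp0 : 0 < p := by omega
  constructor
  · intro hcoeff k hk X hXE hdj hsize hrk
    obtain ⟨B, hB⟩ := M.exists_isBasis (X ⟨p - 1, Nat.sub_lt hp0 one_pos⟩)
      (by rw [hE]; exact Set.subset_univ _)
    have hBcard : B.ncard = l - k := (rkIn_eq_ncard_basis hB).symm.trans hrk
    set X' := Function.update X ⟨p - 1, Nat.sub_lt hp0 one_pos⟩ B with hX'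
    have hdj' : Pairwise (Function.onFun Disjoint X') := pairwise_update hp0 hdj hB.subset
    have hXp' : M.Indep (X' ⟨p - 1, Nat.sub_lt hp0 one_pos⟩) := by
      rw [hX', Function.update_self]; exact hB.indep
    have hMeq : matroidXq M X' hp0 = matroidXq M X hp0 := matroidXq_update hp0 hdj hB
    have hncard : ((X' ⟨p - 1, Nat.sub_lt hp0 one_pos⟩).ncard : ℤ) = (l : ℤ) - (k : ℤ) := by
      rw [hX', Function.update_self, hBcard, Nat.cast_sub hk]
    have key : ∀ c : Fin p → ℤ, piTuple (matroidXq M X hp0) (fun j => (k : ℤ) + c j)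
        = (Tset M (fun j => (l : ℤ) + c j) (dfun hp0 X')).card
          * ∏ e : α, (ddel X' e).factorial := by
      intro c
      rw [← hMeq]
      have h1 := piTuple_eq_card_mul (M := M) hp0 hdj' hXp' (fun j => (l : ℤ) + c j)
      rw [show (fun j => (l : ℤ) + c j - ((X' ⟨p - 1, Nat.sub_lt hp0 one_pos⟩).ncard : ℤ))
          = (fun j => (k : ℤ) + c j) from funext fun j => by rw [hncard]; ring] at h1
      exact h1
    show piTuple (matroidXq M X hp0) (fun j => (k : ℤ) + m j)
        ≤ piTuple (matroidXq M X hp0) (fun j => (k : ℤ) + n j)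
    rw [key m, key n]
    refine Nat.mul_le_mul_right _ ?_
    have hd := hcoeff (Finsupp.equivFunOnFinite.symm (dfun hp0 X'))
    rw [coeff_prod_fkZ, coeff_prod_fkZ] at hd
    have hfun : (fun e => (Finsupp.equivFunOnFinite.symm (dfun hp0 X')) e) = dfun hp0 X' := by
      funext e; simp
    rw [hfun] at hd
    exact_mod_cast hd
  · intro hpi d
    rw [coeff_prod_fkZ, coeff_prod_fkZ, Nat.cast_le]
    by_cases hTm : (Tset M (fun j => (l : ℤ) + m j) (fun e => d e)).card = 0
    · rw [hTm]; exact Nat.zero_le _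
    obtain ⟨I, hI⟩ := Finset.card_ne_zero.mp hTm
    have hI' := hI
    rw [Tset, Finset.mem_filter] at hI'
    obtain ⟨-, hIind, hIpat⟩ := hI'
    set X : Fin p → Set α :=
      fun j => if (j : ℕ) = p - 1 then {e | d e = p} else {e | d e = (j : ℕ) + 1} with hXdef
    have hval : ∀ i : Fin p, ∀ e ∈ X i,
        d e = (if (i : ℕ) = p - 1 then p else (i : ℕ) + 1) := by
      intro i e he
      simp only [hXdef] at he
      by_cases hi : (i : ℕ) = p - 1
      · rw [if_pos hi] at he ⊢; exact he
      · rw [if_neg hi] at he ⊢; exact he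
    have hXpl : X ⟨p - 1, Nat.sub_lt hp0 one_pos⟩ = {e | d e = p} := by
      simp only [hXdef]
      simp
    have hdj : Pairwise (Function.onFun Disjoint X) := by
      intro i j hne
      refine Set.disjoint_left.mpr fun {e} hei hej => hne (Fin.ext ?_)
      have h1 := hval i e hei
      have h2 := hval j e hej
      have hi2 := i.isLt
      have hj2 := j.isLt
      split_ifs at h1 h2 <;> omega
    have hXpI : ∀ e ∈ X ⟨p - 1, Nat.sub_lt hp0 one_pos⟩, ∀ j, e ∈ I j := by
      intro e he j
      rw [hXpl] at he
      have h1 : (Finset.univ.filter (fun j => e ∈ I j)).card = p := by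
        rw [hIpat e]; exact he
      have h2 : Finset.univ.filter (fun j => e ∈ I j) = Finset.univ := by
        apply Finset.eq_univ_of_card
        rw [h1, Fintype.card_fin]
      have h3 := Finset.mem_univ j
      rw [← h2, Finset.mem_filter] at h3
      exact h3.2
    have hXpind : M.Indep (X ⟨p - 1, Nat.sub_lt hp0 one_pos⟩) :=
      (hIind ⟨p - 1, Nat.sub_lt hp0 one_pos⟩).1.subset fun e he => hXpI e he _
    have hd_eq : (fun e => d e) = dfun hp0 X := by
      funext e
      rw [dfun]
      by_cases he : e ∈ X ⟨p - 1, Nat.sub_lt hp0 one_pos⟩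
      · rw [if_pos he]
        rw [hXpl] at he
        exact he
      · rw [if_neg he]
        rcases Nat.eq_zero_or_pos (d e) with h0 | hpos
        · rw [h0]
          refine (ddel_of_forall fun j hj => ?_).symm
          have := hval j e hj
          by_contra hc
          rw [if_neg hc] at this
          omega
        · have hdp : d e ≠ p := by
            intro hc
            exact he (by rw [hXpl]; exact hc)
          have hdlep : d e ≤ p := by
            rw [← hIpat e]
            exact (Finset.card_filter_le _ _).trans
              (le_of_eq (by rw [Finset.card_univ, Fintype.card_fin]))
          have hj0lt : d e - 1 < p := by omega
          have hj₀ne : ((⟨d e - 1, hj0lt⟩ : Fin p) : ℕ) ≠ p - 1 := by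
            show d e - 1 ≠ p - 1
            omega
          have hej₀ : e ∈ X ⟨d e - 1, hj0lt⟩ := by
            simp only [hXdef]
            rw [if_neg hj₀ne]
            show d e = (d e - 1) + 1
            omega
          rw [ddel_of_mem hdj hej₀ hj₀ne]
          show d e = (d e - 1) + 1
          omega
    have hjneg : ∃ j : Fin p, m j ≤ 0 := by
      by_contra hcon
      push_neg at hcon
      have : (0 : ℤ) < ∑ j, m j :=
        Finset.sum_pos (fun j _ => hcon j) ⟨⟨0, hp0⟩, Finset.mem_univ _⟩
      omega
    obtain ⟨j₁, hj₁⟩ := hjneg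
    have hXple : (X ⟨p - 1, Nat.sub_lt hp0 one_pos⟩).ncard ≤ l := by
      have hsub1 : X ⟨p - 1, Nat.sub_lt hp0 one_pos⟩ ⊆ ↑(I j₁) := fun e he => hXpI e he j₁
      have h1 : (X ⟨p - 1, Nat.sub_lt hp0 one_pos⟩).ncard ≤ (↑(I j₁) : Set α).ncard :=
        Set.ncard_le_ncard hsub1 (Set.toFinite _)
      rw [Set.ncard_coe_finset] at h1
      have h2 := (hIind j₁).2
      omega
    set k : ℕ := l - (X ⟨p - 1, Nat.sub_lt hp0 one_pos⟩).ncard with hkdef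
    have hk : k ≤ l := Nat.sub_le _ _
    have hXpk : (X ⟨p - 1, Nat.sub_lt hp0 one_pos⟩).ncard = l - k := by omega
    have hcast : ((X ⟨p - 1, Nat.sub_lt hp0 one_pos⟩).ncard : ℤ) = (l : ℤ) - (k : ℤ) := by
      rw [hXpk, Nat.cast_sub hk]
    have hddelXp : ∀ e ∈ X ⟨p - 1, Nat.sub_lt hp0 one_pos⟩, ddel X e = 0 := by
      intro e he
      refine ddel_of_forall fun j hj => ?_
      rw [mem_unique hdj hj he]
    have hsum_dfun : ∀ e, dfun hp0 X e
        = ddel X e + (if e ∈ X ⟨p - 1, Nat.sub_lt hp0 one_pos⟩ then p else 0) := by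
      intro e
      rw [dfun]
      by_cases he : e ∈ X ⟨p - 1, Nat.sub_lt hp0 one_pos⟩
      · rw [if_pos he, if_pos he, hddelXp e he, zero_add]
      · rw [if_neg he, if_neg he, add_zero]
    have hsum1 : ∑ e : α, d e = ∑ j, (I j).card := by
      calc ∑ e : α, d e = ∑ e : α, (Finset.univ.filter (fun j => e ∈ I j)).card :=
            Finset.sum_congr rfl fun e _ => (hIpat e).symm
        _ = ∑ e : α, ∑ j, (if e ∈ I j then 1 else 0) :=
            Finset.sum_congr rfl fun e _ => Finset.card_filter _ _
        _ = ∑ j, ∑ e : α, (if e ∈ I j then 1 else 0) := Finset.sum_comm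
        _ = ∑ j, (I j).card := by
            refine Finset.sum_congr rfl fun j _ => ?_
            rw [← Finset.card_filter, Finset.filter_univ_mem]
    have hsum2 : ((∑ j, (I j).card : ℕ) : ℤ) = (p : ℤ) * l := by
      push_cast
      rw [show ∑ j, ((I j).card : ℤ) = ∑ j, ((l : ℤ) + m j) from
        Finset.sum_congr rfl fun j _ => (hIind j).2]
      rw [Finset.sum_add_distrib, hm, add_zero, Finset.sum_const, Finset.card_univ,
        Fintype.card_fin, nsmul_eq_mul]
    have hsum3 : ∑ e : α, dfun hp0 X e
        = (∑ e : α, ddel X e) + (X ⟨p - 1, Nat.sub_lt hp0 one_pos⟩).ncard * p := by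
      simp_rw [hsum_dfun]
      rw [Finset.sum_add_distrib]
      congr 1
      rw [Finset.sum_ite, Finset.sum_const, Finset.sum_const_zero, add_zero, smul_eq_mul]
      congr 1
      rw [Set.ncard_eq_toFinset_card', ← Set.filter_mem_univ_eq_toFinset]
    have hsumd : ∑ e : α, d e = ∑ e : α, dfun hp0 X e :=
      Finset.sum_congr rfl fun e _ => congrFun hd_eq e
    have hsize : (matroidXq M X hp0).E.ncard = p * k := by
      rw [groundXq hp0 hdj, ncard_NEset]
      have h2 : ((∑ e : α, d e : ℕ) : ℤ) = (p : ℤ) * l := by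
        rw_mod_cast [hsum1]
        exact_mod_cast hsum2
      rw [hsumd, hsum3] at h2
      have h1 : ((∑ e : α, ddel X e : ℕ) : ℤ) = (p : ℤ) * k := by
        push_cast at h2 ⊢
        rw [hcast] at h2
        linarith
      exact_mod_cast h1
    have hrk : rkIn M (X ⟨p - 1, Nat.sub_lt hp0 one_pos⟩) = l - k := by
      rw [rkIn_indep hXpind, hXpk]
    have h := hpi k hk X (fun j => by rw [hE]; exact Set.subset_univ _) hdj hsize hrk
    have h' : piTuple (matroidXq M X hp0) (fun j => (k : ℤ) + m j)
        ≤ piTuple (matroidXq M X hp0) (fun j => (k : ℤ) + n j) := h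
    have key : ∀ c : Fin p → ℤ, piTuple (matroidXq M X hp0) (fun j => (k : ℤ) + c j)
        = (Tset M (fun j => (l : ℤ) + c j) (dfun hp0 X)).card
          * ∏ e : α, (ddel X e).factorial := by
      intro c
      have h1 := piTuple_eq_card_mul (M := M) hp0 hdj hXpind (fun j => (l : ℤ) + c j)
      rw [show (fun j => (l : ℤ) + c j - ((X ⟨p - 1, Nat.sub_lt hp0 one_pos⟩).ncard : ℤ))
          = (fun j => (k : ℤ) + c j) from funext fun j => by rw [hcast]; ring] at h1
      exact h1
    rw [key m, key n] at h'
    rw [hd_eq]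
    exact Nat.le_of_mul_le_mul_right h' (Finset.prod_pos fun e _ => Nat.factorial_pos _)
end

section
/- Let M be a matroid on a finite ground set E and let l be a positive integer. The coefficientwise inequality f_l(M)^2 ≥ (1 + 1/l) f_{l−1}(M) f_{l+1}(M) holds if and only if for every integer k ≤ l and every pair of disjoint subsets X, Y ⊆ E such that |X| = 2k and the rank of Y in M equals l − k, the minor N = M(X ∪ Y)/Y (the restriction of M to X ∪ Y followed by contraction of Y) satisfies π_{k,k}(N) ≥ (1 + 1/l) π_{k−1,k+1}(N). -/
open scoped Classical
open Matroid

/-- `fk M k` is the polynomial `Σ_{I independent in M, |I| = k} Π_{e ∈ I} x_e`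
in `ℝ[x_e : e ∈ E]`, for a matroid `M` whose ground set is the whole (finite) type. -/
noncomputable def fk {α : Type*} [Fintype α] (M : Matroid α) (k : ℕ) : MvPolynomial α ℝ :=
  ∑ I ∈ Finset.univ.filter (fun I : Finset α => M.Indep ↑I ∧ I.card = k),
    ∏ e ∈ I, MvPolynomial.X e

/-- `pi2 M i j` is the number of ordered pairs `(A, B)` of disjoint subsets of the
ground set of `M` with `A ∪ B = M.E`, `|A| = i`, `|B| = j`, and both independent. -/
noncomputable def pi2 {α : Type*} (M : Matroid α) (i j : ℤ) : ℕ :=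
  {AB : Set α × Set α | AB.1 ∪ AB.2 = M.E ∧ Disjoint AB.1 AB.2 ∧
    M.Indep AB.1 ∧ M.Indep AB.2 ∧ (AB.1.ncard : ℤ) = i ∧ (AB.2.ncard : ℤ) = j}.ncard

section Aux

open Set

/-- The exponent finsupp of the squarefree monomial attached to a finset. -/
noncomputable def DD {α : Type*} (I : Finset α) : α →₀ ℕ := ∑ e ∈ I, Finsupp.single e 1

lemma DD_apply {α : Type*} (I : Finset α) (e : α) : DD I e = if e ∈ I then 1 else 0 := by
  classical
  simp [DD, Finsupp.finset_sum_apply, Finsupp.single_apply, Finset.sum_ite_eq' I e (fun _ => 1)]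

lemma prod_X_eq {α : Type*} (I : Finset α) :
    (∏ e ∈ I, MvPolynomial.X e : MvPolynomial α ℝ) = MvPolynomial.monomial (DD I) 1 := by
  rw [DD, MvPolynomial.monomial_sum_one]
  simp [MvPolynomial.X]

lemma coeff_fk_mul {α : Type*} [Fintype α] (M : Matroid α) (i j : ℕ) (d : α →₀ ℕ) :
    MvPolynomial.coeff d (fk M i * fk M j) =
      ((Finset.univ.filter (fun IJ : Finset α × Finset α =>
        M.Indep ↑IJ.1 ∧ IJ.1.card = i ∧ M.Indep ↑IJ.2 ∧ IJ.2.card = j ∧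
          DD IJ.1 + DD IJ.2 = d)).card : ℝ) := by
  classical
  have L : MvPolynomial.coeff d (fk M i * fk M j)
      = ∑ I : Finset α, ∑ J : Finset α,
          if M.Indep ↑I ∧ I.card = i ∧ M.Indep ↑J ∧ J.card = j ∧ DD I + DD J = d
          then (1:ℝ) else 0 := by
    simp only [fk, prod_X_eq, Finset.sum_mul_sum, MvPolynomial.monomial_mul, one_mul,
      MvPolynomial.coeff_sum, MvPolynomial.coeff_monomial]
    rw [Finset.sum_filter]
    refine Finset.sum_congr rfl fun I _ => ?_
    by_cases hI : M.Indep ↑I ∧ I.card = i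
    · rw [if_pos hI, Finset.sum_filter]
      refine Finset.sum_congr rfl fun J _ => ?_
      split_ifs <;> simp_all
    · rw [if_neg hI]
      refine (Finset.sum_eq_zero fun J _ => ?_).symm
      split_ifs <;> simp_all
  rw [L, Finset.card_filter]
  push_cast
  rw [← Finset.univ_product_univ, Finset.sum_product]

lemma indep_union_basis_exchange {α : Type*} {M : Matroid α} {A Y W W' : Set α}
    (hW : M.IsBasis W Y) (hW' : M.IsBasis W' Y) (hAY : Disjoint A Y) (hAE : A ⊆ M.E)
    (hAfin : A.Finite) (hWfin : W.Finite) (hA : M.Indep (A ∪ W')) : M.Indep (A ∪ W) := by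
  have hYE : Y ⊆ M.E := hW.subset_ground
  have hb' : M.IsBasis (A ∪ W') (A ∪ Y) := by
    refine hA.isBasis_of_forall_insert (union_subset_union_right _ hW'.subset) fun e he => ?_
    have heY : e ∈ Y \ W' := by
      obtain ⟨h1, h2⟩ := he
      rcases h1 with h1 | h1
      · exact absurd (Or.inl h1) h2
      · exact ⟨h1, fun hw => h2 (Or.inr hw)⟩
    refine (hW'.insert_dep heY).superset (insert_subset_insert subset_union_right) ?_
    exact insert_subset (hYE heY.1) (union_subset hAE hW'.indep.subset_ground)
  obtain ⟨J, hJ, hWJ⟩ := hW.indep.subset_isBasis_of_subset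
    (hW.subset.trans subset_union_right) (union_subset hAE hYE)
  have hJY : J ∩ Y = W :=
    (hW.eq_of_subset_indep (hJ.indep.inter_right Y) (subset_inter hWJ hW.subset)
      inter_subset_right).symm
  have hJsplit : J = (J ∩ A) ∪ W := by
    rw [← hJY]
    ext e
    constructor
    · intro he
      rcases hJ.subset he with h | h
      · exact Or.inl ⟨he, h⟩
      · exact Or.inr ⟨he, h⟩
    · rintro (⟨h, _⟩ | ⟨h, _⟩) <;> exact h
  have hWW' : W.encard = W'.encard := hW.encard_eq_encard hW'
  have hdisj1 : Disjoint (J ∩ A) W := by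
    refine Disjoint.mono inter_subset_right hW.subset hAY
  have hdisj2 : Disjoint A W' := hAY.mono_right hW'.subset
  have hcard : (J ∩ A).encard + W.encard = A.encard + W.encard := by
    have h1 : J.encard = (A ∪ W').encard := hJ.encard_eq_encard hb'
    rw [hJsplit, encard_union_eq hdisj1] at h1
    rw [h1, encard_union_eq hdisj2, hWW']
  have hWtop : W.encard ≠ ⊤ := hWfin.encard_lt_top.ne
  have hcard' : (J ∩ A).encard = A.encard := WithTop.add_right_cancel hWtop hcard
  have hJA : J ∩ A = A :=
    (hAfin.subset inter_subset_right).eq_of_subset_of_encard_le inter_subset_right hcard'.symm.le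
  have : J = A ∪ W := by rw [hJsplit, hJA]
  exact this ▸ hJ.indep

lemma contract_indep_iff' {α : Type*} {M' : Matroid α} {Y W A : Set α}
    (hW : M'.IsBasis W Y) (hA : A ⊆ M'.E \ Y) (hAfin : A.Finite) (hWfin : W.Finite) :
    ((M'✶ ↾ (M'.E \ Y))✶).Indep A ↔ M'.Indep (A ∪ W) := by
  have hYE : Y ⊆ M'.E := hW.subset_ground
  have hAY : Disjoint A Y := disjoint_sdiff_left.mono_left hA
  have hAE : A ⊆ M'.E := hA.trans diff_subset
  have hX'E : M'.E \ Y ⊆ M'✶.E := by rw [Matroid.dual_ground]; exact diff_subset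
  rw [Matroid.dual_indep_iff_exists (by rwa [Matroid.restrict_ground_eq])]
  constructor
  · rintro ⟨B, hB, hABdisj⟩
    rw [Matroid.isBase_restrict_iff hX'E] at hB
    obtain ⟨Bs, hBs, hBeq⟩ := hB.exists_isBase
    have hBsE : Bs ⊆ M'.E := hBs.subset_ground
    have hB0 : M'.IsBase (M'.E \ Bs) := hBs.compl_isBase_of_dual
    have hcompl : M'.E \ (M'.E \ Bs) = Bs := diff_diff_cancel_left hBsE
    have hbasisY : M'.IsBasis ((M'.E \ Bs) ∩ Y) Y := by
      rw [hB0.inter_isBasis_iff_compl_inter_isBasis_dual hYE, hcompl, ← hBeq]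
      exact hB
    have hAB0 : A ⊆ M'.E \ Bs := by
      intro e he
      refine ⟨hAE he, fun heBs => ?_⟩
      exact hABdisj.le_bot ⟨he, hBeq ▸ ⟨heBs, hA he⟩⟩
    have hind : M'.Indep (A ∪ ((M'.E \ Bs) ∩ Y)) :=
      hB0.indep.subset (union_subset hAB0 inter_subset_left)
    exact indep_union_basis_exchange hW hbasisY hAY hAE hAfin hWfin hind
  · intro h
    obtain ⟨B0, hB0, hsub⟩ := h.exists_isBase_superset
    have hB0Y : B0 ∩ Y = W :=
      (hW.eq_of_subset_indep (hB0.indep.inter_right Y)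
        (subset_inter ((subset_union_right).trans hsub) hW.subset) inter_subset_right).symm
    have hbasisY : M'.IsBasis (B0 ∩ Y) Y := hB0Y ▸ hW
    have hdual := (hB0.inter_isBasis_iff_compl_inter_isBasis_dual hYE).mp hbasisY
    refine ⟨(M'.E \ B0) ∩ (M'.E \ Y), ?_, ?_⟩
    · rw [Matroid.isBase_restrict_iff hX'E]
      exact hdual
    · have hAB0 : A ⊆ B0 := (subset_union_left).trans hsub
      exact Set.disjoint_left.mpr fun e heA hem => hem.1.2 (hAB0 heA)

lemma DD_eq_iff {α : Type*} {W X I J : Finset α} (hWX : Disjoint W X) :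
    DD I + DD J = DD W + DD W + DD X ↔ (I ∩ J = W ∧ I ∪ J = W ∪ X) := by
  classical
  constructor
  · intro h
    have h' : ∀ e, (if e ∈ I then 1 else 0) + (if e ∈ J then 1 else 0)
        = (((if e ∈ W then 1 else 0) + (if e ∈ W then 1 else 0)) + (if e ∈ X then 1 else 0) : ℕ) := by
      intro e
      have := DFunLike.congr_fun h e
      simpa [Finsupp.add_apply, DD_apply] using this
    constructor <;> ext e <;> have h2 := h' e <;>
      have hd : e ∈ W → e ∉ X := (fun ha hb => Finset.disjoint_left.mp hWX ha hb) <;>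
      simp only [Finset.mem_inter, Finset.mem_union] <;>
      by_cases hI : e ∈ I <;> by_cases hJ : e ∈ J <;> by_cases hW : e ∈ W <;>
      by_cases hX : e ∈ X <;> simp_all
  · rintro ⟨h1, h2⟩
    ext e
    have h3 := Finset.ext_iff.mp h1 e
    have h4 := Finset.ext_iff.mp h2 e
    have hd : e ∈ W → e ∉ X := (fun ha hb => Finset.disjoint_left.mp hWX ha hb)
    simp only [Finset.mem_inter, Finset.mem_union] at h3 h4
    simp only [Finsupp.add_apply, DD_apply]
    by_cases hI : e ∈ I <;> by_cases hJ : e ∈ J <;> by_cases hW : e ∈ W <;>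
      by_cases hX : e ∈ X <;> simp_all

lemma rkIn_eq_ncard_basis_s9 {α : Type*} [Fintype α] {M : Matroid α} {W Y : Set α}
    (hW : M.IsBasis W Y) : rkIn M Y = W.ncard := by
  have hub : ∀ n ∈ {n : ℕ | ∃ I, M.Indep I ∧ I ⊆ Y ∧ I.ncard = n}, n ≤ W.ncard := by
    rintro n ⟨I, hI, hIY, rfl⟩
    obtain ⟨J, hJ, hIJ⟩ := hI.subset_isBasis_of_subset hIY hW.subset_ground
    have h1 : I.ncard ≤ J.ncard := Set.ncard_le_ncard hIJ J.toFinite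
    have h2 : J.ncard = W.ncard := by
      rw [Set.ncard_def, Set.ncard_def, hJ.encard_eq_encard hW]
    omega
  have hmem : W.ncard ∈ {n : ℕ | ∃ I, M.Indep I ∧ I ⊆ Y ∧ I.ncard = n} :=
    ⟨W, hW.indep, hW.subset, rfl⟩
  exact le_antisymm (csSup_le ⟨_, hmem⟩ hub) (le_csSup ⟨W.ncard, hub⟩ hmem)

lemma count_eq_pi2 {α : Type*} [Fintype α] (M : Matroid α) (X W : Finset α) (Y : Set α)
    (hXY : Disjoint (↑X : Set α) Y) (hWY : M.IsBasis ↑W Y) (i j : ℕ) :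
    ((Finset.univ.filter (fun IJ : Finset α × Finset α =>
      M.Indep ↑IJ.1 ∧ IJ.1.card = i ∧ M.Indep ↑IJ.2 ∧ IJ.2.card = j ∧
        DD IJ.1 + DD IJ.2 = DD W + DD W + DD X)).card)
    = pi2 (mcontract (M ↾ (↑X ∪ Y)) Y) ((i:ℤ) - W.card) ((j:ℤ) - W.card) := by
  classical
  set N := mcontract (M ↾ (↑X ∪ Y)) Y with hN
  have hYE : Y ⊆ M.E := hWY.subset_ground
  have hEdiff : ((↑X : Set α) ∪ Y) \ Y = ↑X :=
    union_diff_cancel_right (by simpa [Set.disjoint_iff_inter_eq_empty.mp hXY] using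
      (Set.inter_subset_inter_left Y (subset_refl _)))
  have hNE : N.E = ↑X := by
    show ((M ↾ (↑X ∪ Y))✶ ↾ ((M ↾ (↑X ∪ Y)).E \ Y))✶.E = ↑X
    rw [Matroid.dual_ground, Matroid.restrict_ground_eq, Matroid.restrict_ground_eq, hEdiff]
  have hWsubY : (↑W : Set α) ⊆ Y := hWY.subset
  have hWX : Disjoint (↑W : Set α) (↑X : Set α) := (hXY.symm.mono_left hWsubY)
  have hWXf : Disjoint W X := by rwa [← Finset.disjoint_coe]
  have hWbasis' : (M ↾ ((↑X : Set α) ∪ Y)).IsBasis ↑W Y :=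
    hWY.isBasis_restrict_of_subset subset_union_right
  have hNindep : ∀ A : Set α, A ⊆ ↑X → (N.Indep A ↔ M.Indep (A ∪ ↑W)) := by
    intro A hAX
    have hsub : A ⊆ (M ↾ ((↑X : Set α) ∪ Y)).E \ Y := by
      rw [Matroid.restrict_ground_eq, hEdiff]; exact hAX
    have h1 : N.Indep A ↔ (M ↾ ((↑X : Set α) ∪ Y)).Indep (A ∪ ↑W) := by
      rw [hN]
      exact contract_indep_iff' hWbasis' hsub A.toFinite (Set.toFinite _)
    rw [h1, Matroid.restrict_indep_iff]
    refine and_iff_left (union_subset (hAX.trans subset_union_left)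
      (hWsubY.trans subset_union_right))
  set T := (Finset.univ.filter (fun IJ : Finset α × Finset α =>
      M.Indep ↑IJ.1 ∧ IJ.1.card = i ∧ M.Indep ↑IJ.2 ∧ IJ.2.card = j ∧
        DD IJ.1 + DD IJ.2 = DD W + DD W + DD X)) with hT
  set f : Finset α × Finset α → Set α × Set α := fun p => (↑p.1 \ ↑W, ↑p.2 \ ↑W) with hf
  set S := {AB : Set α × Set α | AB.1 ∪ AB.2 = N.E ∧ Disjoint AB.1 AB.2 ∧
    N.Indep AB.1 ∧ N.Indep AB.2 ∧ (AB.1.ncard : ℤ) = (i:ℤ) - W.card ∧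
    (AB.2.ncard : ℤ) = (j:ℤ) - W.card} with hS
  have hmemT : ∀ p : Finset α × Finset α, p ∈ T ↔
      (M.Indep ↑p.1 ∧ p.1.card = i ∧ M.Indep ↑p.2 ∧ p.2.card = j ∧
        (p.1 ∩ p.2 = W ∧ p.1 ∪ p.2 = W ∪ X)) := by
    intro p
    rw [hT, Finset.mem_filter, DD_eq_iff hWXf]
    simp
  have him : S = f '' ↑T := by
    ext ⟨A, B⟩
    constructor
    · rintro ⟨hAB, hdisj, hIA, hIB, hcA, hcB⟩
      have hcA' : (A.ncard : ℤ) = (i:ℤ) - W.card := hcA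
      have hcB' : (B.ncard : ℤ) = (j:ℤ) - W.card := hcB
      have hdisj' : Disjoint A B := hdisj
      have hIA' : N.Indep A := hIA
      have hIB' : N.Indep B := hIB
      rw [hNE] at hAB
      have hAB2 : A ∪ B = (↑X : Set α) := hAB
      have hA : A ⊆ ↑X := hAB ▸ subset_union_left
      have hB : B ⊆ ↑X := hAB ▸ subset_union_right
      have hAW : Disjoint A (↑W : Set α) := (hWX.symm.mono_left hA)
      have hBW : Disjoint B (↑W : Set α) := (hWX.symm.mono_left hB)
      refine ⟨(A.toFinset ∪ W, B.toFinset ∪ W), ?_, ?_⟩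
      · rw [Finset.mem_coe, hmemT]
        dsimp only
        have hcoe1 : (↑(A.toFinset ∪ W) : Set α) = A ∪ ↑W := by
          rw [Finset.coe_union, Set.coe_toFinset]
        have hcoe2 : (↑(B.toFinset ∪ W) : Set α) = B ∪ ↑W := by
          rw [Finset.coe_union, Set.coe_toFinset]
        have hAcard : A.toFinset.card = A.ncard := by
          rw [Set.ncard_eq_toFinset_card']
        have hBcard : B.toFinset.card = B.ncard := by
          rw [Set.ncard_eq_toFinset_card']
        refine ⟨by rw [hcoe1]; exact (hNindep A hA).mp hIA',
          ?_, by rw [hcoe2]; exact (hNindep B hB).mp hIB', ?_, ?_, ?_⟩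
        · rw [Finset.card_union_of_disjoint (by rwa [← Finset.disjoint_coe, Set.coe_toFinset]),
            hAcard]
          omega
        · rw [Finset.card_union_of_disjoint (by rwa [← Finset.disjoint_coe, Set.coe_toFinset]),
            hBcard]
          omega
        · apply Finset.coe_injective
          rw [Finset.coe_inter, hcoe1, hcoe2]
          have d1 := Set.disjoint_left.mp hdisj'
          have d2 := Set.disjoint_left.mp hAW
          have d3 := Set.disjoint_left.mp hBW
          ext e
          have e1 := @d1 e
          have e2 := @d2 e
          have e3 := @d3 e
          simp only [Set.mem_inter_iff, Set.mem_union, Finset.mem_coe]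
          tauto
        · apply Finset.coe_injective
          rw [Finset.coe_union, hcoe1, hcoe2]
          have hABe := Set.ext_iff.mp hAB2
          ext e
          have e0 := hABe e
          simp only [Set.mem_union, Finset.coe_union, Finset.mem_coe, Finset.mem_union]
            at e0 ⊢
          tauto
      · rw [hf]
        simp only [Prod.mk.injEq]
        constructor
        · rw [Finset.coe_union, Set.coe_toFinset, Set.union_diff_right]
          exact hAW.sdiff_eq_left
        · rw [Finset.coe_union, Set.coe_toFinset, Set.union_diff_right]
          exact hBW.sdiff_eq_left
    · rintro ⟨⟨I, J⟩, hpT, heq⟩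
      simp only [hf, Prod.mk.injEq] at heq
      obtain ⟨hA', hB'⟩ := heq
      subst hA'
      subst hB'
      rw [Finset.mem_coe, hmemT] at hpT
      obtain ⟨hI, hIc, hJ, hJc, hIJ, hU⟩ := hpT
      have hWI : W ⊆ I := hIJ ▸ Finset.inter_subset_left
      have hWJ : W ⊆ J := hIJ ▸ Finset.inter_subset_right
      have hIX : (↑I \ ↑W : Set α) ⊆ ↑X := by
        intro e he
        have : e ∈ I ∪ J := Finset.mem_union_left _ he.1
        rw [hU, Finset.mem_union] at this
        rcases this with h | h
        · exact absurd h he.2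
        · exact h
      have hJX : (↑J \ ↑W : Set α) ⊆ ↑X := by
        intro e he
        have : e ∈ I ∪ J := Finset.mem_union_right _ he.1
        rw [hU, Finset.mem_union] at this
        rcases this with h | h
        · exact absurd h he.2
        · exact h
      refine ⟨?_, ?_, ?_, ?_, ?_, ?_⟩
      · rw [hNE]
        show (↑I \ ↑W : Set α) ∪ (↑J \ ↑W) = ↑X
        apply Set.Subset.antisymm (Set.union_subset hIX hJX)
        intro e he
        have heU : e ∈ I ∪ J := by rw [hU]; exact Finset.mem_union_right _ he
        have heW : e ∉ W := fun h => Finset.disjoint_left.mp hWXf h he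
        rw [Finset.mem_union] at heU
        rcases heU with h | h
        · exact Or.inl ⟨h, heW⟩
        · exact Or.inr ⟨h, heW⟩
      · show Disjoint (↑I \ ↑W : Set α) (↑J \ ↑W)
        refine Set.disjoint_left.mpr fun e he1 he2 => he1.2 ?_
        have : e ∈ I ∩ J := Finset.mem_inter.mpr ⟨he1.1, he2.1⟩
        rw [hIJ] at this
        exact this
      · refine (hNindep _ hIX).mpr ?_
        rwa [Set.diff_union_of_subset (by exact_mod_cast hWI)]
      · refine (hNindep _ hJX).mpr ?_
        rwa [Set.diff_union_of_subset (by exact_mod_cast hWJ)]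
      · show (((↑I : Set α) \ ↑W).ncard : ℤ) = (i:ℤ) - W.card
        rw [← Finset.coe_sdiff, Set.ncard_coe_finset, Finset.card_sdiff_of_subset hWI, hIc]
        have : W.card ≤ i := hIc ▸ Finset.card_le_card hWI
        omega
      · show (((↑J : Set α) \ ↑W).ncard : ℤ) = (j:ℤ) - W.card
        rw [← Finset.coe_sdiff, Set.ncard_coe_finset, Finset.card_sdiff_of_subset hWJ, hJc]
        have : W.card ≤ j := hJc ▸ Finset.card_le_card hWJ
        omega
  have hinj : Set.InjOn f ↑T := by
    rintro ⟨I, J⟩ h1 ⟨I', J'⟩ h2 heq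
    rw [Finset.mem_coe, hmemT] at h1 h2
    have hWI : W ⊆ I := h1.2.2.2.2.1 ▸ Finset.inter_subset_left
    have hWJ : W ⊆ J := h1.2.2.2.2.1 ▸ Finset.inter_subset_right
    have hWI' : W ⊆ I' := h2.2.2.2.2.1 ▸ Finset.inter_subset_left
    have hWJ' : W ⊆ J' := h2.2.2.2.2.1 ▸ Finset.inter_subset_right
    rw [hf, Prod.mk.injEq] at heq
    have e1 : (↑I : Set α) = ↑I' := by
      rw [← Set.diff_union_of_subset (show (↑W : Set α) ⊆ ↑I by exact_mod_cast hWI),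
        ← Set.diff_union_of_subset (show (↑W : Set α) ⊆ ↑I' by exact_mod_cast hWI'), heq.1]
    have e2 : (↑J : Set α) = ↑J' := by
      rw [← Set.diff_union_of_subset (show (↑W : Set α) ⊆ ↑J by exact_mod_cast hWJ),
        ← Set.diff_union_of_subset (show (↑W : Set α) ⊆ ↑J' by exact_mod_cast hWJ'), heq.2]
    exact Prod.ext (Finset.coe_injective e1) (Finset.coe_injective e2)
  have : pi2 N ((i:ℤ) - W.card) ((j:ℤ) - W.card) = S.ncard := rfl
  rw [this, him, Set.ncard_image_of_injOn hinj, Set.ncard_coe_finset]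

end Aux

/-- Zhao's criterion: for a matroid `M` on a finite ground set and `l ≥ 1`, the
coefficientwise inequality `f_l(M)^2 ≥ (1 + 1/l) f_{l-1}(M) f_{l+1}(M)` holds if and
only if, for every `k ≤ l` and all disjoint `X, Y ⊆ E` with `|X| = 2k` and
`r_M(Y) = l - k`, the minor `N = M(X ∪ Y)/Y` satisfies
`π_{k,k}(N) ≥ (1 + 1/l) π_{k-1,k+1}(N)`. -/
theorem fk_sq_ge_one_add_inv_iff_pi2 {α : Type*} [Fintype α] (M : Matroid α)
    (hE : M.E = Set.univ) (l : ℕ) (hl : 0 < l) :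
    (∀ d : α →₀ ℕ,
        (1 + 1 / (l : ℝ)) * MvPolynomial.coeff d (fk M (l - 1) * fk M (l + 1)) ≤
          MvPolynomial.coeff d ((fk M l) ^ 2)) ↔
      (∀ k : ℕ, k ≤ l → ∀ X Y : Set α, X ⊆ M.E → Y ⊆ M.E → Disjoint X Y →
        X.ncard = 2 * k → rkIn M Y = l - k →
        (1 + 1 / (l : ℝ)) *
            (pi2 (mcontract (M ↾ (X ∪ Y)) Y) ((k : ℤ) - 1) ((k : ℤ) + 1) : ℝ) ≤
          (pi2 (mcontract (M ↾ (X ∪ Y)) Y) (k : ℤ) (k : ℤ) : ℝ)) := by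
  classical
  constructor
  · intro hcoeff k hk X Y hXE hYE hXY hXcard hrk
    obtain ⟨W, hW⟩ := M.exists_isBasis Y (by rw [hE]; exact Set.subset_univ _)
    have hWcard : W.ncard = l - k := by rw [← rkIn_eq_ncard_basis_s9 hW, hrk]
    set Xf := X.toFinite.toFinset with hXf
    set Wf := W.toFinite.toFinset with hWf
    have hXfc : (↑Xf : Set α) = X := Set.Finite.coe_toFinset _
    have hWfc : (↑Wf : Set α) = W := Set.Finite.coe_toFinset _
    have hWfcard : Wf.card = l - k := by
      rw [← hWcard, hWf, ← Set.ncard_eq_toFinset_card]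
    have h := hcoeff (DD Wf + DD Wf + DD Xf)
    rw [sq, coeff_fk_mul, coeff_fk_mul] at h
    rw [count_eq_pi2 M Xf Wf Y (by rw [hXfc]; exact hXY) (by rw [hWfc]; exact hW) (l-1) (l+1),
      count_eq_pi2 M Xf Wf Y (by rw [hXfc]; exact hXY) (by rw [hWfc]; exact hW) l l] at h
    rw [hXfc] at h
    have e1 : ((l : ℕ) : ℤ) - (Wf.card : ℤ) = (k : ℤ) := by omega
    have e2 : ((l - 1 : ℕ) : ℤ) - (Wf.card : ℤ) = (k : ℤ) - 1 := by omega
    have e3 : ((l + 1 : ℕ) : ℤ) - (Wf.card : ℤ) = (k : ℤ) + 1 := by omega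
    rw [e1, e2, e3] at h
    exact h
  · intro hpi d
    rw [sq, coeff_fk_mul, coeff_fk_mul]
    set T1 := (Finset.univ.filter (fun IJ : Finset α × Finset α =>
      M.Indep ↑IJ.1 ∧ IJ.1.card = l - 1 ∧ M.Indep ↑IJ.2 ∧ IJ.2.card = l + 1 ∧
        DD IJ.1 + DD IJ.2 = d)) with hT1
    rcases T1.eq_empty_or_nonempty with hT1e | ⟨⟨I0, J0⟩, hmem⟩
    · rw [hT1e]
      simp only [Finset.card_empty, Nat.cast_zero, mul_zero]
      exact Nat.cast_nonneg _
    · rw [hT1, Finset.mem_filter] at hmem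
      obtain ⟨-, hI0, hI0c, hJ0, hJ0c, hdd⟩ := hmem
      set Wf := I0 ∩ J0 with hWfdef
      set Xf := (I0 ∪ J0) \ Wf with hXfdef
      have hWXdisj : Disjoint Wf Xf :=
        Finset.disjoint_left.mpr fun {a} ha hb => (Finset.mem_sdiff.mp hb).2 ha
      have hd_eq : d = DD Wf + DD Wf + DD Xf := by
        ext e
        have h0 := DFunLike.congr_fun hdd e
        simp only [Finsupp.add_apply, DD_apply, hWfdef, hXfdef, Finset.mem_inter,
          Finset.mem_union, Finset.mem_sdiff] at h0 ⊢
        by_cases hI : e ∈ I0 <;> by_cases hJ : e ∈ J0 <;> simp_all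
      have hWfsub : Wf ⊆ I0 := Finset.inter_subset_left
      have hWle : Wf.card ≤ l - 1 := hI0c ▸ Finset.card_le_card hWfsub
      set k := l - Wf.card with hkdef
      have hkl : k ≤ l := Nat.sub_le _ _
      have hWindep : M.Indep (↑Wf : Set α) := hI0.subset (by exact_mod_cast hWfsub)
      have hBasis : M.IsBasis (↑Wf : Set α) (↑Wf : Set α) := hWindep.isBasis_self
      have hrk : rkIn M (↑Wf : Set α) = l - k := by
        rw [rkIn_eq_ncard_basis_s9 hBasis, Set.ncard_coe_finset]
        omega
      have hcardIJ : (I0 ∪ J0).card + Wf.card = (l - 1) + (l + 1) := by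
        rw [hWfdef, Finset.card_union_add_card_inter, hI0c, hJ0c]
      have hXfsub : Wf ⊆ I0 ∪ J0 := Finset.inter_subset_left.trans Finset.subset_union_left
      have hXfcard : (↑Xf : Set α).ncard = 2 * k := by
        rw [Set.ncard_coe_finset, hXfdef, Finset.card_sdiff_of_subset hXfsub]
        omega
      have hdisjXY : Disjoint (↑Xf : Set α) (↑Wf : Set α) := by
        rw [Finset.disjoint_coe]
        exact hWXdisj.symm
      have hdisjXYf : Disjoint Xf Wf := hWXdisj.symm
      have hp := hpi k hkl ↑Xf ↑Wf (by rw [hE]; exact Set.subset_univ _)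
        (by rw [hE]; exact Set.subset_univ _) hdisjXY hXfcard hrk
      rw [hT1, hd_eq]
      rw [count_eq_pi2 M Xf Wf ↑Wf hdisjXY hBasis (l-1) (l+1),
        count_eq_pi2 M Xf Wf ↑Wf hdisjXY hBasis l l]
      have e1 : ((l : ℕ) : ℤ) - (Wf.card : ℤ) = (k : ℤ) := by omega
      have e2 : ((l - 1 : ℕ) : ℤ) - (Wf.card : ℤ) = (k : ℤ) - 1 := by omega
      have e3 : ((l + 1 : ℕ) : ℤ) - (Wf.card : ℤ) = (k : ℤ) + 1 := by omega
      rw [e1, e2, e3]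
      exact hp
end
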